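/- arXiv:1105.5954 — 5 statements merged into one kernel-verified Lean document; each statement's English description precedes it below -/
import Mathlib

section
/- There exists a constant C > 0, independent of ρ and of the penalty term Π, such that for every ρ > 0, every penalty term Π, and every solution z_ρ of the penalised obstacle equation, one has ‖ min{ max_{u∈U}{A_u z_ρ − b_u} , max{Ãz_ρ − b̃ , 0} − Π(b̃ − Ãz_ρ) } ‖∞ ≤ C/ρ, where the i-th component of the vector inside the norm is min{ max_{u∈U}(A_u z_ρ − b_u)_i , max{(Ãz_ρ − b̃)_i , 0} − π_i((b̃ − Ãz_ρ)_i) }. -/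
open Matrix Filter

/-- The set `K^o_N`: Z-matrices (non-positive off-diagonal entries) which are
strictly diagonally dominant. -/
def KoMat {N : ℕ} (A : Matrix (Fin N) (Fin N) ℝ) : Prop :=
  (∀ r s, r ≠ s → A r s ≤ 0) ∧
  ∀ r, ∑ s ∈ Finset.univ.erase r, |A r s| < A r r

/-- A penalty term `Π(y) = (π₁(y₁),…,π_N(y_N))`: each `π i` is continuous,
non-decreasing, identically zero on `(-∞,0]` and strictly positive on `(0,∞)`. -/
structure PenaltyTerm (N : ℕ) where
  π : Fin N → ℝ → ℝ
  cont : ∀ i, Continuous (π i)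
  mono : ∀ i, Monotone (π i)
  eq_zero : ∀ i y, y ≤ 0 → π i y = 0
  pos : ∀ i y, 0 < y → 0 < π i y

/-- The penalised obstacle equation
`max_{u∈U}{A_u z - b_u} - ρ · Π(b̃ - Ã z) = 0` (componentwise); the maximum over
the compact set `U` is expressed via `sSup` of the image. -/
def PenObstEq {N : ℕ} (𝔄 : ℝ → Matrix (Fin N) (Fin N) ℝ) (𝔅 : ℝ → (Fin N → ℝ))
    (U : Set ℝ) (At : Matrix (Fin N) (Fin N) ℝ) (bt : Fin N → ℝ)
    (P : PenaltyTerm N) (ρ : ℝ) (z : Fin N → ℝ) : Prop :=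
  ∀ i : Fin N,
    sSup ((fun u => (𝔄 u *ᵥ z - 𝔅 u) i) '' U) -
      ρ * P.π i ((bt - At *ᵥ z) i) = 0

/-- At a minimizing index, `(A *ᵥ z) j ≤ (∑ s, A j s) * z j` for Z-matrices. -/
lemma mulVec_le_of_min {N : ℕ} (A : Matrix (Fin N) (Fin N) ℝ)
    (hA : ∀ r s, r ≠ s → A r s ≤ 0) (z : Fin N → ℝ) (j : Fin N)
    (hj : ∀ s, z j ≤ z s) : (A *ᵥ z) j ≤ (∑ s, A j s) * z j := by
  rw [Finset.sum_mul]
  simp only [Matrix.mulVec, dotProduct]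
  refine Finset.sum_le_sum fun s _ => ?_
  rcases eq_or_ne s j with rfl | hs
  · exact le_rfl
  · exact mul_le_mul_of_nonpos_left (hj s) (hA j s (Ne.symm hs))

/-- At a maximizing index, `(∑ s, A j s) * z j ≤ (A *ᵥ z) j` for Z-matrices. -/
lemma mulVec_ge_of_max {N : ℕ} (A : Matrix (Fin N) (Fin N) ℝ)
    (hA : ∀ r s, r ≠ s → A r s ≤ 0) (z : Fin N → ℝ) (j : Fin N)
    (hj : ∀ s, z s ≤ z j) : (∑ s, A j s) * z j ≤ (A *ᵥ z) j := by
  rw [Finset.sum_mul]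
  simp only [Matrix.mulVec, dotProduct]
  refine Finset.sum_le_sum fun s _ => ?_
  rcases eq_or_ne s j with rfl | hs
  · exact le_rfl
  · exact mul_le_mul_of_nonpos_left (hj s) (hA j s (Ne.symm hs))

/-- The row sum equals the diagonal minus the sum of off-diagonal absolute values. -/
lemma row_sum_eq {N : ℕ} (A : Matrix (Fin N) (Fin N) ℝ)
    (hA : ∀ r s, r ≠ s → A r s ≤ 0) (j : Fin N) :
    A j j - ∑ s ∈ Finset.univ.erase j, |A j s| = ∑ s, A j s := by
  have h1 : ∑ s ∈ Finset.univ.erase j, |A j s| = -∑ s ∈ Finset.univ.erase j, A j s := by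
    rw [← Finset.sum_neg_distrib]
    exact Finset.sum_congr rfl fun s hs =>
      abs_of_nonpos (hA j s (Ne.symm (Finset.mem_erase.1 hs).1))
  rw [h1, ← Finset.sum_erase_add _ _ (Finset.mem_univ j)]
  ring

/-- The residual estimate
`‖ min{ max_{u∈U}{A_u z_ρ - b_u}, max{Ã z_ρ - b̃, 0} - Π(b̃ - Ã z_ρ) } ‖∞ ≤ C/ρ`
with `C > 0` independent of `ρ` and of the penalty term `Π`. -/
theorem penalised_obstacle_residual_estimate
    (N : ℕ) (hN : 0 < N) (a b : ℝ) (hab : a ≤ b)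
    (𝔄 : ℝ → Matrix (Fin N) (Fin N) ℝ) (𝔅 : ℝ → (Fin N → ℝ))
    (hAcont : ContinuousOn 𝔄 (Set.Icc a b)) (hbcont : ContinuousOn 𝔅 (Set.Icc a b))
    (hKo : ∀ u ∈ Set.Icc a b, KoMat (𝔄 u))
    (At : Matrix (Fin N) (Fin N) ℝ) (bt : Fin N → ℝ) (hAt : KoMat At) :
    ∃ C > (0:ℝ), ∀ ρ > (0:ℝ), ∀ P : PenaltyTerm N, ∀ z : Fin N → ℝ,
      PenObstEq 𝔄 𝔅 (Set.Icc a b) At bt P ρ z →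
      ‖(fun i : Fin N =>
          min (sSup ((fun u => (𝔄 u *ᵥ z - 𝔅 u) i) '' Set.Icc a b))
            (max ((At *ᵥ z - bt) i) 0 - P.π i ((bt - At *ᵥ z) i)))‖ ≤ C / ρ := by
  haveI : Nonempty (Fin N) := ⟨⟨0, hN⟩⟩
  have haI : a ∈ Set.Icc a b := Set.left_mem_Icc.2 hab
  have hIc : IsCompact (Set.Icc a b) := isCompact_Icc
  -- continuity of entries
  have hAe : ∀ i s : Fin N, ContinuousOn (fun u => 𝔄 u i s) (Set.Icc a b) := fun i s =>
    continuousOn_pi.1 (continuousOn_pi.1 hAcont i) s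
  have hbe : ∀ i : Fin N, ContinuousOn (fun u => 𝔅 u i) (Set.Icc a b) := fun i =>
    (continuous_apply i).comp_continuousOn hbcont
  -- bound on 𝔅
  obtain ⟨B0, hB0⟩ := hIc.exists_bound_of_continuousOn hbcont
  set B := max B0 0 with hBdef
  have hBnn : (0:ℝ) ≤ B := le_max_right _ _
  have hB : ∀ u ∈ Set.Icc a b, ∀ i, |𝔅 u i| ≤ B := by
    intro u hu i
    have h1 := norm_le_pi_norm (𝔅 u) i
    rw [Real.norm_eq_abs] at h1
    exact h1.trans ((hB0 u hu).trans (le_max_left _ _))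
  -- bound on entries of 𝔄
  obtain ⟨CA0, hCA0⟩ := hIc.exists_bound_of_continuousOn
    (f := fun u (p : Fin N × Fin N) => 𝔄 u p.1 p.2)
    (continuousOn_pi.2 fun p => hAe p.1 p.2)
  set CA := max CA0 0 with hCAdef
  have hCAnn : (0:ℝ) ≤ CA := le_max_right _ _
  have hCA : ∀ u ∈ Set.Icc a b, ∀ i s, |𝔄 u i s| ≤ CA := by
    intro u hu i s
    have h1 := norm_le_pi_norm (fun p : Fin N × Fin N => 𝔄 u p.1 p.2) (i, s)
    rw [Real.norm_eq_abs] at h1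
    exact h1.trans ((hCA0 u hu).trans (le_max_left _ _))
  -- uniform diagonal dominance bound for the family 𝔄
  have hδr : ∀ r : Fin N, ∃ d : ℝ, 0 < d ∧ ∀ u ∈ Set.Icc a b,
      d ≤ 𝔄 u r r - ∑ s ∈ Finset.univ.erase r, |𝔄 u r s| := by
    intro r
    have hc : ContinuousOn
        (fun u => 𝔄 u r r - ∑ s ∈ Finset.univ.erase r, |𝔄 u r s|) (Set.Icc a b) :=
      (hAe r r).sub (continuousOn_finset_sum _ fun s _ => (hAe r s).abs)
    obtain ⟨u₀, hu₀, hmin⟩ := hIc.exists_isMinOn ⟨a, haI⟩ hc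
    refine ⟨_, sub_pos.2 ((hKo u₀ hu₀).2 r), fun u hu => ?_⟩
    exact hmin hu
  choose δr hδrpos hδrle using hδr
  set δ := Finset.univ.inf' Finset.univ_nonempty δr with hδdef
  have hδpos : 0 < δ := (Finset.lt_inf'_iff _).2 fun r _ => hδrpos r
  have hδsum : ∀ u ∈ Set.Icc a b, ∀ r, δ ≤ ∑ s, 𝔄 u r s := by
    intro u hu r
    calc δ ≤ δr r := Finset.inf'_le δr (Finset.mem_univ r)
    _ ≤ 𝔄 u r r - ∑ s ∈ Finset.univ.erase r, |𝔄 u r s| := hδrle r u hu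
    _ = ∑ s, 𝔄 u r s := row_sum_eq _ (hKo u hu).1 r
  -- diagonal dominance bound for At
  set δt := Finset.univ.inf' Finset.univ_nonempty
    (fun r => At r r - ∑ s ∈ Finset.univ.erase r, |At r s|) with hδtdef
  have hδtpos : 0 < δt := (Finset.lt_inf'_iff _).2 fun r _ => sub_pos.2 (hAt.2 r)
  have hδtsum : ∀ r, δt ≤ ∑ s, At r s := by
    intro r
    calc δt ≤ At r r - ∑ s ∈ Finset.univ.erase r, |At r s| :=
          Finset.inf'_le _ (Finset.mem_univ r)
    _ = ∑ s, At r s := row_sum_eq _ hAt.1 r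
  -- bound on bt
  set Bt := Finset.univ.sup' Finset.univ_nonempty (fun i => |bt i|) with hBtdef
  have hBt : ∀ i, |bt i| ≤ Bt := fun i => Finset.le_sup' (fun i => |bt i|) (Finset.mem_univ i)
  have hBtnn : (0:ℝ) ≤ Bt := (abs_nonneg _).trans (hBt ⟨0, hN⟩)
  -- the constant
  set Z := max (B / δ) (Bt / δt) with hZdef
  have hZnn : (0:ℝ) ≤ Z := le_trans (div_nonneg hBnn hδpos.le) (le_max_left _ _)
  set C := (N : ℝ) * CA * Z + B + 1 with hCdef
  have hCpos : (0:ℝ) < C := by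
    have h1 : (0:ℝ) ≤ (N : ℝ) * CA * Z :=
      mul_nonneg (mul_nonneg (Nat.cast_nonneg N) hCAnn) hZnn
    linarith
  refine ⟨C, hCpos, ?_⟩
  intro ρ hρ P z hz
  have hπnn : ∀ i t, 0 ≤ P.π i t := by
    intro i t
    rcases le_or_gt t 0 with h | h
    · rw [P.eq_zero i t h]
    · exact (P.pos i t h).le
  -- compactness of the value sets
  have hφ : ∀ i, ContinuousOn (fun u => (𝔄 u *ᵥ z - 𝔅 u) i) (Set.Icc a b) := by
    intro i
    have hc : ContinuousOn (fun u => (∑ s, 𝔄 u i s * z s) - 𝔅 u i) (Set.Icc a b) :=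
      (continuousOn_finset_sum _ fun s _ => (hAe i s).mul continuousOn_const).sub (hbe i)
    exact hc.congr fun u hu => by simp [Matrix.mulVec, dotProduct]
  set S : Fin N → Set ℝ := fun i => ((fun u => (𝔄 u *ᵥ z - 𝔅 u) i) '' Set.Icc a b) with hSdef
  have hSc : ∀ i, IsCompact (S i) := fun i => hIc.image_of_continuousOn (hφ i)
  have hSne : ∀ i, (S i).Nonempty := fun i => ⟨_, a, haI, rfl⟩
  have hSmem : ∀ i, sSup (S i) ∈ S i := fun i => (hSc i).sSup_mem (hSne i)
  have hSbdd : ∀ i, BddAbove (S i) := fun i => (hSc i).bddAbove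
  have heq : ∀ i, sSup (S i) = ρ * P.π i ((bt - At *ᵥ z) i) := fun i => sub_eq_zero.1 (hz i)
  have hS0 : ∀ i, 0 ≤ sSup (S i) := by
    intro i
    rw [heq i]
    exact mul_nonneg hρ.le (hπnn _ _)
  -- lower bound on z
  obtain ⟨j, -, hjmin⟩ := Finset.exists_min_image Finset.univ z Finset.univ_nonempty
  have hjmin' : ∀ s, z j ≤ z s := fun s => hjmin s (Finset.mem_univ s)
  have hlow : ∀ s, -(B / δ) ≤ z s := by
    obtain ⟨u, huI, huv⟩ := hSmem j
    have h1 : 0 ≤ (𝔄 u *ᵥ z - 𝔅 u) j := by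
      have h0 := hS0 j; rw [← huv] at h0; exact h0
    have h2 : 𝔅 u j ≤ (𝔄 u *ᵥ z) j := by
      have := h1; simp only [Pi.sub_apply] at this; linarith
    have h3 : (𝔄 u *ᵥ z) j ≤ (∑ s, 𝔄 u j s) * z j :=
      mulVec_le_of_min _ (hKo u huI).1 z j hjmin'
    have hBb : -B ≤ 𝔅 u j := (abs_le.1 (hB u huI j)).1
    have key : -B ≤ (∑ s, 𝔄 u j s) * z j := hBb.trans (h2.trans h3)
    have hzj : -(B / δ) ≤ z j := by
      rcases le_or_gt 0 (z j) with h | h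
      · exact le_trans (neg_nonpos_of_nonneg (div_nonneg hBnn hδpos.le)) h
      · have h4 : (∑ s, 𝔄 u j s) * z j ≤ δ * z j :=
          mul_le_mul_of_nonpos_right (hδsum u huI j) h.le
        have h5 : -B ≤ δ * z j := key.trans h4
        rw [← neg_div]
        rw [div_le_iff₀ hδpos]
        linarith
    exact fun s => hzj.trans (hjmin' s)
  -- upper bound on z
  obtain ⟨k, -, hkmax⟩ := Finset.exists_max_image Finset.univ z Finset.univ_nonempty
  have hkmax' : ∀ s, z s ≤ z k := fun s => hkmax s (Finset.mem_univ s)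
  have hupp : ∀ s, z s ≤ Z := by
    have hzk : z k ≤ Z := by
      by_contra hcon
      push_neg at hcon
      have hzk0 : 0 < z k :=
        lt_of_le_of_lt (le_trans (div_nonneg hBtnn hδtpos.le) (le_max_right _ _)) hcon
      have h4 : (∑ s, At k s) * z k ≤ (At *ᵥ z) k := mulVec_ge_of_max _ hAt.1 z k hkmax'
      have h5 : δt * z k ≤ (At *ᵥ z) k :=
        le_trans (mul_le_mul_of_nonneg_right (hδtsum k) hzk0.le) h4
      have h6 : (bt - At *ᵥ z) k < 0 := by
        have hd : Bt / δt < z k := lt_of_le_of_lt (le_max_right _ _) hcon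
        have h7 : Bt < δt * z k := by
          have := mul_lt_mul_of_pos_left hd hδtpos
          rw [mul_div_cancel₀ _ hδtpos.ne'] at this
          exact this
        have hbtk : bt k ≤ Bt := (abs_le.1 (hBt k)).2
        simp only [Pi.sub_apply]
        linarith
      have h8 : sSup (S k) = 0 := by rw [heq k, P.eq_zero _ _ h6.le, mul_zero]
      have h9 : (𝔄 a *ᵥ z - 𝔅 a) k ≤ 0 := h8 ▸ le_csSup (hSbdd k) ⟨a, haI, rfl⟩
      have h10 : (∑ s, 𝔄 a k s) * z k ≤ (𝔄 a *ᵥ z) k :=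
        mulVec_ge_of_max _ (hKo a haI).1 z k hkmax'
      have h11 : δ * z k ≤ (∑ s, 𝔄 a k s) * z k :=
        mul_le_mul_of_nonneg_right (hδsum a haI k) hzk0.le
      have h12 : (𝔄 a *ᵥ z) k ≤ 𝔅 a k := by
        simp only [Pi.sub_apply] at h9; linarith
      have h13 : 𝔅 a k ≤ B := (abs_le.1 (hB a haI k)).2
      have h14 : z k ≤ B / δ := by
        rw [le_div_iff₀ hδpos]
        nlinarith
      exact absurd (h14.trans (le_max_left _ _)) (not_le.2 hcon)
    exact fun s => (hkmax' s).trans hzk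
  have habs : ∀ s, |z s| ≤ Z := by
    intro s
    rw [abs_le]
    refine ⟨le_trans ?_ (hlow s), hupp s⟩
    exact neg_le_neg (le_max_left _ _)
  -- bound on the suprema
  have hSupB : ∀ i, sSup (S i) ≤ (N : ℝ) * CA * Z + B := by
    intro i
    obtain ⟨u, huI, huv⟩ := hSmem i
    rw [← huv]
    show (𝔄 u *ᵥ z - 𝔅 u) i ≤ (N : ℝ) * CA * Z + B
    have hrw : (𝔄 u *ᵥ z - 𝔅 u) i = (∑ s, 𝔄 u i s * z s) - 𝔅 u i := by
      simp [Matrix.mulVec, dotProduct]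
    rw [hrw]
    have hsum : ∑ s, 𝔄 u i s * z s ≤ (N : ℝ) * CA * Z := by
      calc ∑ s, 𝔄 u i s * z s ≤ ∑ _s : Fin N, CA * Z := by
            refine Finset.sum_le_sum fun s _ => ?_
            calc 𝔄 u i s * z s ≤ |𝔄 u i s * z s| := le_abs_self _
            _ = |𝔄 u i s| * |z s| := abs_mul _ _
            _ ≤ CA * Z := mul_le_mul (hCA u huI i s) (habs s) (abs_nonneg _) hCAnn
      _ = (N : ℝ) * (CA * Z) := by
            simp [Finset.sum_const, Finset.card_univ, nsmul_eq_mul]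
      _ = (N : ℝ) * CA * Z := by ring
    have hbb : -(𝔅 u i) ≤ B := by
      have := (abs_le.1 (hB u huI i)).1; linarith
    linarith
  -- final estimate
  have hCdiv : 0 ≤ C / ρ := div_nonneg hCpos.le hρ.le
  rw [pi_norm_le_iff_of_nonneg hCdiv]
  intro i
  rw [Real.norm_eq_abs]
  show |min (sSup (S i)) (max ((At *ᵥ z - bt) i) 0 - P.π i ((bt - At *ᵥ z) i))| ≤ C / ρ
  have hti : (At *ᵥ z - bt) i = -((bt - At *ᵥ z) i) := by
    simp only [Pi.sub_apply]; ring
  rcases le_or_gt ((bt - At *ᵥ z) i) 0 with h | h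
  · have hp : P.π i ((bt - At *ᵥ z) i) = 0 := P.eq_zero _ _ h
    have hs0 : sSup (S i) = 0 := by rw [heq i, hp, mul_zero]
    rw [hti, hp, hs0, sub_zero]
    rw [min_eq_left (le_max_right _ _), abs_zero]
    exact hCdiv
  · have hmax : max (-((bt - At *ᵥ z) i)) 0 = 0 := max_eq_right (by linarith)
    rw [hti, hmax, zero_sub]
    have hp := P.pos i _ h
    rw [min_eq_right (le_trans (neg_nonpos_of_nonneg hp.le) (hS0 i))]
    rw [abs_neg, abs_of_nonneg hp.le]
    have hπe : P.π i ((bt - At *ᵥ z) i) = sSup (S i) / ρ := by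
      rw [heq i, mul_div_cancel_left₀ _ hρ.ne']
    rw [hπe]
    exact (div_le_div_iff_of_pos_right hρ).2 ((hSupB i).trans (by linarith))
end

section
/- Fix a penalty term Π, and suppose that for every ρ > 0 there is a solution z_ρ of the penalised obstacle equation. Then there exists z* ∈ ℝ^N such that z_ρ → z* as ρ → ∞, and z* solves the discrete HJB obstacle problem min{ max_{u∈U}{A_u z* − b_u}, Ãz* − b̃ } = 0. -/
open Matrix Filter

lemma rowsum_pos {A : Matrix (Fin N) (Fin N) ℝ} (hA : KoMat A) (i : Fin N) :
    0 < ∑ j, A i j := by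
  have h := hA.2 i
  have : ∑ j, A i j = A i i + ∑ j ∈ Finset.univ.erase i, A i j := by
    rw [add_comm, Finset.sum_erase_add _ _ (Finset.mem_univ i)]
  rw [this]
  have h2 : ∑ j ∈ Finset.univ.erase i, A i j ≥ -∑ j ∈ Finset.univ.erase i, |A i j| := by
    rw [← Finset.sum_neg_distrib]
    exact Finset.sum_le_sum fun j _ => neg_abs_le _
  linarith

lemma diag_pos {A : Matrix (Fin N) (Fin N) ℝ} (hA : KoMat A) (i : Fin N) :
    0 < A i i := by
  have h := hA.2 i
  have : 0 ≤ ∑ j ∈ Finset.univ.erase i, |A i j| :=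
    Finset.sum_nonneg fun j _ => abs_nonneg _
  linarith

lemma mulVec_key {A : Matrix (Fin N) (Fin N) ℝ} (hA : KoMat A) (d : Fin N → ℝ)
    (i : Fin N) (h : ∀ j, d j ≤ d i) :
    d i * (∑ j, A i j) ≤ (A *ᵥ d) i := by
  simp only [Matrix.mulVec, dotProduct]
  rw [Finset.mul_sum]
  refine Finset.sum_le_sum fun j _ => ?_
  rcases eq_or_ne j i with rfl | hj
  · ring_nf; exact le_refl _
  · have hAij : A i j ≤ 0 := hA.1 i j (Ne.symm hj)
    calc d i * A i j ≤ d j * A i j := by nlinarith [h j]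
    _ = A i j * d j := mul_comm _ _

lemma mulVec_abs_le (A : Matrix (Fin N) (Fin N) ℝ) (d : Fin N → ℝ) (i : Fin N) :
    (A *ᵥ d) i ≤ ∑ j, |A i j| * |d j| := by
  simp only [Matrix.mulVec, dotProduct]
  exact Finset.sum_le_sum fun j _ => le_trans (le_abs_self _) (by rw [abs_mul])


-- continuity of u ↦ (𝔄 u *ᵥ z - 𝔅 u) i on U
lemma g_contOn {a b : ℝ} (𝔄 : ℝ → Matrix (Fin N) (Fin N) ℝ) (𝔅 : ℝ → (Fin N → ℝ))
    (hAcont : ContinuousOn 𝔄 (Set.Icc a b)) (hbcont : ContinuousOn 𝔅 (Set.Icc a b))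
    (z : Fin N → ℝ) (i : Fin N) :
    ContinuousOn (fun u => (𝔄 u *ᵥ z - 𝔅 u) i) (Set.Icc a b) := by
  have h1 : ContinuousOn (fun u => ∑ j, 𝔄 u i j * z j) (Set.Icc a b) := by
    apply continuousOn_finset_sum
    intro j _
    exact (((continuous_apply j).comp (continuous_apply i)).comp_continuousOn hAcont).mul
      continuousOn_const
  have h2 : ContinuousOn (fun u => 𝔅 u i) (Set.Icc a b) :=
    (continuous_apply i).comp_continuousOn hbcont
  have : (fun u => (𝔄 u *ᵥ z - 𝔅 u) i) = fun u => (∑ j, 𝔄 u i j * z j) - 𝔅 u i := by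
    funext u
    simp [Matrix.mulVec, dotProduct]
  rw [this]
  exact h1.sub h2

lemma sup_attained {a b : ℝ} (hab : a ≤ b) {f : ℝ → ℝ}
    (hf : ContinuousOn f (Set.Icc a b)) :
    ∃ u ∈ Set.Icc a b, f u = sSup (f '' Set.Icc a b) ∧
      ∀ v ∈ Set.Icc a b, f v ≤ f u := by
  obtain ⟨u, hu, hmax⟩ := isCompact_Icc.exists_isMaxOn (Set.nonempty_Icc.2 hab) hf
  refine ⟨u, hu, ?_, fun v hv => hmax hv⟩
  apply le_antisymm
  · exact le_csSup (isCompact_Icc.image_of_continuousOn hf).bddAbove ⟨u, hu, rfl⟩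
  · apply csSup_le ((Set.nonempty_Icc.2 hab).image f)
    rintro _ ⟨v, hv, rfl⟩
    exact hmax hv

lemma sup_le_of_le {a b : ℝ} (hab : a ≤ b) {f : ℝ → ℝ} {c : ℝ}
    (h : ∀ u ∈ Set.Icc a b, f u ≤ c) : sSup (f '' Set.Icc a b) ≤ c := by
  apply csSup_le ((Set.nonempty_Icc.2 hab).image f)
  rintro _ ⟨v, hv, rfl⟩
  exact h v hv

-- uniform entry bound
lemma entry_bound {a b : ℝ} (𝔄 : ℝ → Matrix (Fin N) (Fin N) ℝ)
    (hAcont : ContinuousOn 𝔄 (Set.Icc a b)) :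
    ∃ C : ℝ, 0 ≤ C ∧ ∀ u ∈ Set.Icc a b, ∀ i j, |𝔄 u i j| ≤ C := by
  have hc : ∀ i j : Fin N, ∃ c : ℝ, ∀ u ∈ Set.Icc a b, |𝔄 u i j| ≤ c := by
    intro i j
    have h1 : ContinuousOn ((fun M : Matrix (Fin N) (Fin N) ℝ => M i j) ∘ 𝔄)
        (Set.Icc a b) :=
      ((continuous_apply j).comp (continuous_apply i)).comp_continuousOn hAcont
    have hcont : ContinuousOn (fun u => |𝔄 u i j|) (Set.Icc a b) := h1.abs
    obtain ⟨K, hK⟩ := (isCompact_Icc.image_of_continuousOn hcont).bddAbove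
    exact ⟨K, fun u hu => hK ⟨u, hu, rfl⟩⟩
  choose c hcspec using hc
  obtain ⟨C, hC⟩ := Finset.exists_le
    ((Finset.univ ×ˢ Finset.univ).image (fun p : Fin N × Fin N => c p.1 p.2))
  refine ⟨max C 0, le_max_right _ _, fun u hu i j => ?_⟩
  have : c i j ≤ C := hC (c i j) (Finset.mem_image.2 ⟨(i,j), by simp, rfl⟩)
  exact le_trans (hcspec i j u hu) (le_trans this (le_max_left _ _))

variable {N : ℕ}

lemma pi_nonneg (P : PenaltyTerm N) (i : Fin N) (y : ℝ) : 0 ≤ P.π i y := by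
  rcases le_or_gt y 0 with h | h
  · rw [P.eq_zero i y h]
  · exact le_of_lt (P.pos i y h)

section Main

variable {a b : ℝ} {𝔄 : ℝ → Matrix (Fin N) (Fin N) ℝ} {𝔅 : ℝ → (Fin N → ℝ)}
  {At : Matrix (Fin N) (Fin N) ℝ} {bt : Fin N → ℝ}

lemma comparison (hab : a ≤ b)
    (hAcont : ContinuousOn 𝔄 (Set.Icc a b)) (hbcont : ContinuousOn 𝔅 (Set.Icc a b))
    (hKo : ∀ u ∈ Set.Icc a b, KoMat (𝔄 u)) (hAt : KoMat At)
    (P : PenaltyTerm N) {ρ1 ρ2 : ℝ} (h01 : 0 ≤ ρ1) (h12 : ρ1 ≤ ρ2)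
    {z1 z2 : Fin N → ℝ}
    (h1 : ∀ i, sSup ((fun u => (𝔄 u *ᵥ z1 - 𝔅 u) i) '' Set.Icc a b)
        ≤ ρ1 * P.π i ((bt - At *ᵥ z1) i))
    (h2 : ∀ i, ρ2 * P.π i ((bt - At *ᵥ z2) i)
        ≤ sSup ((fun u => (𝔄 u *ᵥ z2 - 𝔅 u) i) '' Set.Icc a b)) :
    ∀ j, z1 j ≤ z2 j := by
  by_contra hc
  push_neg at hc
  obtain ⟨j0, hj0⟩ := hc
  obtain ⟨i, -, hi⟩ := Finset.exists_max_image Finset.univ (fun j => z1 j - z2 j)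
    ⟨j0, Finset.mem_univ j0⟩
  have hm : 0 < z1 i - z2 i := lt_of_lt_of_le (by linarith) (hi j0 (Finset.mem_univ j0))
  set d : Fin N → ℝ := fun j => z1 j - z2 j with hd
  have hdle : ∀ j, d j ≤ d i := fun j => hi j (Finset.mem_univ j)
  -- strict increase of the sup part
  obtain ⟨u, hu, hueq, -⟩ := sup_attained hab (g_contOn 𝔄 𝔅 hAcont hbcont z2 i)
  have hz1eq : z1 = z2 + d := by funext j; simp [hd]
  have hsup1 : (𝔄 u *ᵥ z1 - 𝔅 u) i ≤ sSup ((fun u => (𝔄 u *ᵥ z1 - 𝔅 u) i) '' Set.Icc a b) :=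
    le_csSup (isCompact_Icc.image_of_continuousOn
      (g_contOn 𝔄 𝔅 hAcont hbcont z1 i)).bddAbove ⟨u, hu, rfl⟩
  have hAd : d i * (∑ j, 𝔄 u i j) ≤ (𝔄 u *ᵥ d) i := mulVec_key (hKo u hu) d i hdle
  have hrow : 0 < ∑ j, 𝔄 u i j := rowsum_pos (hKo u hu) i
  have hsplit : (𝔄 u *ᵥ z1 - 𝔅 u) i = (𝔄 u *ᵥ z2 - 𝔅 u) i + (𝔄 u *ᵥ d) i := by
    rw [hz1eq, Matrix.mulVec_add]
    simp [Pi.sub_apply, Pi.add_apply]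
    ring
  have hstrict : sSup ((fun u => (𝔄 u *ᵥ z2 - 𝔅 u) i) '' Set.Icc a b)
      < sSup ((fun u => (𝔄 u *ᵥ z1 - 𝔅 u) i) '' Set.Icc a b) := by
    rw [← hueq]
    have : 0 < (𝔄 u *ᵥ d) i := lt_of_lt_of_le (mul_pos hm hrow) hAd
    calc (𝔄 u *ᵥ z2 - 𝔅 u) i < (𝔄 u *ᵥ z2 - 𝔅 u) i + (𝔄 u *ᵥ d) i := by linarith
    _ = (𝔄 u *ᵥ z1 - 𝔅 u) i := hsplit.symm
    _ ≤ _ := hsup1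
  -- penalty comparison
  have hAtd : 0 ≤ (At *ᵥ d) i :=
    le_trans (le_of_lt (mul_pos hm (rowsum_pos hAt i))) (mulVec_key hAt d i hdle)
  have hpen : (bt - At *ᵥ z1) i ≤ (bt - At *ᵥ z2) i := by
    have : (At *ᵥ z1) i = (At *ᵥ z2) i + (At *ᵥ d) i := by
      rw [hz1eq, Matrix.mulVec_add]; simp
    simp only [Pi.sub_apply]
    linarith
  have hπ : ρ1 * P.π i ((bt - At *ᵥ z1) i) ≤ ρ2 * P.π i ((bt - At *ᵥ z2) i) :=
    mul_le_mul h12 (P.mono i hpen) (pi_nonneg P i _) (le_trans h01 h12)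
  have := le_trans (le_trans (h1 i) hπ) (h2 i)
  linarith

end Main

section Main2

variable {N : ℕ} {a b : ℝ} {𝔄 : ℝ → Matrix (Fin N) (Fin N) ℝ} {𝔅 : ℝ → (Fin N → ℝ)}

lemma Fdiff (hab : a ≤ b)
    (hAcont : ContinuousOn 𝔄 (Set.Icc a b)) (hbcont : ContinuousOn 𝔅 (Set.Icc a b))
    {C : ℝ} (hC0 : 0 ≤ C) (hC : ∀ u ∈ Set.Icc a b, ∀ i j, |𝔄 u i j| ≤ C)
    {z1 z2 : Fin N → ℝ} {ε : ℝ} (hε : ∀ j, |z1 j - z2 j| ≤ ε) (i : Fin N) :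
    sSup ((fun u => (𝔄 u *ᵥ z1 - 𝔅 u) i) '' Set.Icc a b)
      ≤ sSup ((fun u => (𝔄 u *ᵥ z2 - 𝔅 u) i) '' Set.Icc a b) + N * C * ε := by
  apply sup_le_of_le hab
  intro u hu
  have hmem : (𝔄 u *ᵥ z2 - 𝔅 u) i ≤ sSup ((fun u => (𝔄 u *ᵥ z2 - 𝔅 u) i) '' Set.Icc a b) :=
    le_csSup (isCompact_Icc.image_of_continuousOn
      (g_contOn 𝔄 𝔅 hAcont hbcont z2 i)).bddAbove ⟨u, hu, rfl⟩
  have hsplit : (𝔄 u *ᵥ z1 - 𝔅 u) i = (𝔄 u *ᵥ z2 - 𝔅 u) i + (𝔄 u *ᵥ (z1 - z2)) i := by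
    rw [Matrix.mulVec_sub]
    simp
  have habs : (𝔄 u *ᵥ (z1 - z2)) i ≤ N * C * ε := by
    refine le_trans (mulVec_abs_le _ _ _) ?_
    have : ∀ j : Fin N, |𝔄 u i j| * |(z1 - z2) j| ≤ C * ε := fun j =>
      mul_le_mul (hC u hu i j) (hε j) (abs_nonneg _) hC0
    calc ∑ j, |𝔄 u i j| * |(z1 - z2) j| ≤ ∑ _j : Fin N, C * ε :=
          Finset.sum_le_sum fun j _ => this j
      _ = N * C * ε := by
          rw [Finset.sum_const, Finset.card_univ, Fintype.card_fin, nsmul_eq_mul]; ring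
  linarith

end Main2

/-- As `ρ → ∞`, solutions `z_ρ` of the penalised obstacle equation converge to
a limit `z*` which solves the discrete HJB obstacle problem. -/
theorem penalised_obstacle_convergence
    (N : ℕ) (hN : 0 < N) (a b : ℝ) (hab : a ≤ b)
    (𝔄 : ℝ → Matrix (Fin N) (Fin N) ℝ) (𝔅 : ℝ → (Fin N → ℝ))
    (hAcont : ContinuousOn 𝔄 (Set.Icc a b)) (hbcont : ContinuousOn 𝔅 (Set.Icc a b))
    (hKo : ∀ u ∈ Set.Icc a b, KoMat (𝔄 u))
    (At : Matrix (Fin N) (Fin N) ℝ) (bt : Fin N → ℝ) (hAt : KoMat At)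
    (P : PenaltyTerm N) (z : ℝ → (Fin N → ℝ))
    (hz : ∀ ρ > (0:ℝ), PenObstEq 𝔄 𝔅 (Set.Icc a b) At bt P ρ (z ρ)) :
    ∃ zstar : Fin N → ℝ,
      Tendsto z atTop (nhds zstar) ∧
      ∀ i : Fin N,
        min (sSup ((fun u => (𝔄 u *ᵥ zstar - 𝔅 u) i) '' Set.Icc a b))
          ((At *ᵥ zstar - bt) i) = 0 := by
  have ha : a ∈ Set.Icc a b := ⟨le_refl a, hab⟩
  have hzeq : ∀ ρ, 0 < ρ → ∀ i,
      sSup ((fun u => (𝔄 u *ᵥ z ρ - 𝔅 u) i) '' Set.Icc a b)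
        = ρ * P.π i ((bt - At *ᵥ z ρ) i) :=
    fun ρ hρ i => sub_eq_zero.mp (hz ρ hρ i)
  -- a constant supersolution
  obtain ⟨t, ht⟩ : ∃ t : ℝ, ∀ i, bt i ≤ t * (∑ j, At i j) ∧ 𝔅 a i ≤ t * (∑ j, 𝔄 a i j) := by
    obtain ⟨t, htt⟩ := Finset.exists_le (Finset.univ.image (fun i : Fin N =>
      max ((bt i) / (∑ j, At i j)) ((𝔅 a i) / (∑ j, 𝔄 a i j))))
    refine ⟨t, fun i => ?_⟩
    have h := htt _ (Finset.mem_image_of_mem _ (Finset.mem_univ i))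
    exact ⟨(div_le_iff₀ (rowsum_pos hAt i)).mp (le_trans (le_max_left _ _) h),
      (div_le_iff₀ (rowsum_pos (hKo a ha) i)).mp (le_trans (le_max_right _ _) h)⟩
  have hwpen : ∀ i, (bt - At *ᵥ (fun _ => t)) i ≤ 0 := by
    intro i
    have h1 : (At *ᵥ (fun _ => t)) i = t * ∑ j, At i j := by
      simp [Matrix.mulVec, dotProduct, Finset.mul_sum, mul_comm]
    simp only [Pi.sub_apply, h1]
    linarith [(ht i).1]
  have hwF : ∀ i, (0:ℝ) ≤ sSup ((fun u => (𝔄 u *ᵥ (fun _ => t) - 𝔅 u) i) '' Set.Icc a b) := by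
    intro i
    have h1 : (𝔄 a *ᵥ (fun _ => t)) i = t * ∑ j, 𝔄 a i j := by
      simp [Matrix.mulVec, dotProduct, Finset.mul_sum, mul_comm]
    have h2 : (0:ℝ) ≤ (𝔄 a *ᵥ (fun _ => t) - 𝔅 a) i := by
      simp only [Pi.sub_apply, h1]
      linarith [(ht i).2]
    exact le_trans h2 (le_csSup (isCompact_Icc.image_of_continuousOn
      (g_contOn 𝔄 𝔅 hAcont hbcont _ i)).bddAbove ⟨a, ha, rfl⟩)
  -- monotonicity in ρ and uniform upper bound
  have hmono : ∀ ρ1 ρ2 : ℝ, 0 < ρ1 → ρ1 ≤ ρ2 → ∀ j, z ρ1 j ≤ z ρ2 j := by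
    intro ρ1 ρ2 h0 h12
    exact comparison hab hAcont hbcont hKo hAt P (le_of_lt h0) h12
      (fun i => le_of_eq (hzeq ρ1 h0 i))
      (fun i => ge_of_eq (hzeq ρ2 (lt_of_lt_of_le h0 h12) i))
  have hub : ∀ ρ : ℝ, 0 < ρ → ∀ j, z ρ j ≤ t := by
    intro ρ h0
    exact comparison hab hAcont hbcont hKo hAt P (le_of_lt h0) (le_refl ρ)
      (fun i => le_of_eq (hzeq ρ h0 i))
      (fun i => by rw [P.eq_zero i _ (hwpen i), mul_zero]; exact hwF i)
  -- truncated family and its limit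
  set z' : ℝ → Fin N → ℝ := fun ρ => z (max ρ 1) with hz'def
  have hz'pos : ∀ ρ : ℝ, (0:ℝ) < max ρ 1 := fun ρ => lt_of_lt_of_le one_pos (le_max_right _ _)
  have hz'mono : ∀ {ρ1 ρ2 : ℝ}, ρ1 ≤ ρ2 → ∀ j, z' ρ1 j ≤ z' ρ2 j := by
    intro ρ1 ρ2 h j
    exact hmono _ _ (hz'pos ρ1) (max_le_max h (le_refl 1)) j
  have hz'ub : ∀ ρ j, z' ρ j ≤ t := fun ρ j => hub _ (hz'pos ρ) j
  have hz'lo : ∀ ρ j, z 1 j ≤ z' ρ j := fun ρ j =>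
    hmono 1 _ one_pos (le_max_right ρ 1) j
  have hbdd : ∀ j, BddAbove (Set.range fun ρ => z' ρ j) := by
    intro j
    exact ⟨t, by rintro _ ⟨ρ, rfl⟩; exact hz'ub ρ j⟩
  set zstar : Fin N → ℝ := fun j => ⨆ ρ, z' ρ j with hzstardef
  have htend_j : ∀ j, Tendsto (fun ρ => z' ρ j) atTop (nhds (zstar j)) :=
    fun j => tendsto_atTop_ciSup (fun _ _ h => hz'mono h j) (hbdd j)
  have htend' : Tendsto z' atTop (nhds zstar) := tendsto_pi_nhds.mpr htend_j
  have hzz' : z' =ᶠ[atTop] z :=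
    eventually_atTop.2 ⟨1, fun ρ hρ => by simp [hz'def, max_eq_left hρ]⟩
  have htend : Tendsto z atTop (nhds zstar) := htend'.congr' hzz'
  have hle_star : ∀ ρ j, z' ρ j ≤ zstar j := fun ρ j => le_ciSup (hbdd j) ρ
  -- uniform box bound D
  obtain ⟨D, hD0, hD⟩ : ∃ D : ℝ, 0 ≤ D ∧ ∀ ρ j, |z' ρ j - zstar j| ≤ D := by
    obtain ⟨D0, hD0⟩ := Finset.exists_le (Finset.univ.image (fun j : Fin N => zstar j - z 1 j))
    refine ⟨max D0 0, le_max_right _ _, fun ρ j => ?_⟩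
    have h1 : z' ρ j - zstar j ≤ 0 := sub_nonpos.mpr (hle_star ρ j)
    rw [abs_of_nonpos h1, neg_sub]
    calc zstar j - z' ρ j ≤ zstar j - z 1 j := by linarith [hz'lo ρ j]
      _ ≤ D0 := hD0 _ (Finset.mem_image_of_mem _ (Finset.mem_univ j))
      _ ≤ max D0 0 := le_max_left _ _
  obtain ⟨C, hC0, hC⟩ := entry_bound 𝔄 hAcont
  -- uniform bound on F (z' ρ)
  set K : Fin N → ℝ := fun i =>
    sSup ((fun u => (𝔄 u *ᵥ zstar - 𝔅 u) i) '' Set.Icc a b) + N * C * D with hKdef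
  have hK : ∀ ρ i, sSup ((fun u => (𝔄 u *ᵥ z' ρ - 𝔅 u) i) '' Set.Icc a b) ≤ K i :=
    fun ρ i => Fdiff hab hAcont hbcont hC0 hC (fun j => hD ρ j) i
  -- the penalised equation for z'
  have hz'eq : ∀ ρ i, sSup ((fun u => (𝔄 u *ᵥ z' ρ - 𝔅 u) i) '' Set.Icc a b)
      = (max ρ 1) * P.π i ((bt - At *ᵥ z' ρ) i) :=
    fun ρ i => hzeq _ (hz'pos ρ) i
  -- convergence of the obstacle term
  have htendAt : ∀ i, Tendsto (fun ρ => (bt - At *ᵥ z' ρ) i) atTop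
      (nhds ((bt - At *ᵥ zstar) i)) := by
    intro i
    have h1 : ∀ ρ, (bt - At *ᵥ z' ρ) i = bt i - ∑ j, At i j * z' ρ j := by
      intro ρ; simp [Matrix.mulVec, dotProduct]
    have h2 : (bt - At *ᵥ zstar) i = bt i - ∑ j, At i j * zstar j := by
      simp [Matrix.mulVec, dotProduct]
    simp only [h1, h2]
    exact tendsto_const_nhds.sub (tendsto_finset_sum _ fun j _ =>
      tendsto_const_nhds.mul (htend_j j))
  -- eventual closeness
  have hclose : ∀ ε : ℝ, 0 < ε → ∀ᶠ ρ in atTop, ∀ j, |z' ρ j - zstar j| ≤ ε := by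
    intro ε hε
    rw [eventually_all]
    intro j
    have := Metric.tendsto_nhds.mp (htend_j j) ε hε
    filter_upwards [this] with ρ hρ
    rw [Real.dist_eq] at hρ
    exact le_of_lt hρ
  -- (ii) obstacle constraint at the limit
  have hobst : ∀ i, 0 ≤ (At *ᵥ zstar - bt) i := by
    intro i
    by_contra hcon
    push_neg at hcon
    have he : 0 < (bt - At *ᵥ zstar) i := by
      simp only [Pi.sub_apply] at hcon ⊢
      linarith
    have hp : 0 < P.π i ((bt - At *ᵥ zstar) i / 2) := P.pos i _ (by linarith)
    have hev : ∀ᶠ ρ in atTop, (bt - At *ᵥ zstar) i / 2 < (bt - At *ᵥ z' ρ) i :=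
      (htendAt i).eventually (eventually_gt_nhds (by linarith))
    obtain ⟨ρ, h1, h2⟩ := (hev.and (eventually_ge_atTop
      (max ((K i + 1) / P.π i ((bt - At *ᵥ zstar) i / 2)) 0))).exists
    have hy : P.π i ((bt - At *ᵥ zstar) i / 2) ≤ P.π i ((bt - At *ᵥ z' ρ) i) :=
      P.mono i (le_of_lt h1)
    have hρ0 : 0 ≤ ρ := le_trans (le_max_right _ _) h2
    have hρk : (K i + 1) / P.π i ((bt - At *ᵥ zstar) i / 2) ≤ ρ :=
      le_trans (le_max_left _ _) h2
    have hKi : K i + 1 ≤ ρ * P.π i ((bt - At *ᵥ zstar) i / 2) := (div_le_iff₀ hp).mp hρk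
    have hchain : ρ * P.π i ((bt - At *ᵥ zstar) i / 2)
        ≤ max ρ 1 * P.π i ((bt - At *ᵥ z' ρ) i) :=
      mul_le_mul (le_max_left _ _) hy (le_of_lt hp)
        (le_trans zero_le_one (le_max_right _ _))
    have hfin := hK ρ i
    rw [hz'eq ρ i] at hfin
    have := le_trans hKi (le_trans hchain hfin)
    linarith
  -- (i) F(zstar) ≥ 0
  have hNC : (0:ℝ) ≤ (N:ℝ) * C := mul_nonneg (Nat.cast_nonneg N) hC0
  have hFpos : ∀ i, 0 ≤ sSup ((fun u => (𝔄 u *ᵥ zstar - 𝔅 u) i) '' Set.Icc a b) := by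
    intro i
    by_contra hcon
    push_neg at hcon
    set Fs := sSup ((fun u => (𝔄 u *ᵥ zstar - 𝔅 u) i) '' Set.Icc a b) with hFsdef
    have hε' : 0 < (-Fs) / ((N:ℝ) * C + 1) := div_pos (by linarith) (by linarith)
    obtain ⟨ρ, hρ⟩ := (hclose _ hε').exists
    have h1 := Fdiff hab hAcont hbcont hC0 hC hρ i
    have h2 : 0 ≤ sSup ((fun u => (𝔄 u *ᵥ z' ρ - 𝔅 u) i) '' Set.Icc a b) := by
      rw [hz'eq]
      exact mul_nonneg (le_of_lt (hz'pos ρ)) (pi_nonneg P i _)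
    have key : (N:ℝ) * C * ((-Fs) / ((N:ℝ) * C + 1)) < -Fs := by
      rw [← mul_div_assoc, div_lt_iff₀ (by linarith : (0:ℝ) < (N:ℝ) * C + 1)]
      nlinarith
    rw [← hFsdef] at h1
    linarith
  -- (iii) complementarity
  refine ⟨zstar, htend, fun i => ?_⟩
  rcases eq_or_lt_of_le (hobst i) with h0 | h0
  · rw [min_eq_right]
    · exact h0.symm
    · rw [← h0]; exact hFpos i
  · have hF0 : sSup ((fun u => (𝔄 u *ᵥ zstar - 𝔅 u) i) '' Set.Icc a b) = 0 := by
      have hle : ∀ ε : ℝ, 0 < ε →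
          sSup ((fun u => (𝔄 u *ᵥ zstar - 𝔅 u) i) '' Set.Icc a b) ≤ ε := by
        intro ε hε
        have hε' : 0 < ε / ((N:ℝ) * C + 1) := div_pos hε (by linarith)
        have hev1 : ∀ᶠ ρ in atTop, (bt - At *ᵥ z' ρ) i < 0 := by
          refine (htendAt i).eventually (eventually_lt_nhds ?_)
          simp only [Pi.sub_apply] at h0 ⊢
          linarith
        obtain ⟨ρ, hρ1, hρ2⟩ := (hev1.and (hclose _ hε')).exists
        have hzero : sSup ((fun u => (𝔄 u *ᵥ z' ρ - 𝔅 u) i) '' Set.Icc a b) = 0 := by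
          rw [hz'eq, P.eq_zero i _ (le_of_lt hρ1), mul_zero]
        have hρ2' : ∀ j, |zstar j - z' ρ j| ≤ ε / ((N:ℝ) * C + 1) := by
          intro j
          rw [abs_sub_comm]
          exact hρ2 j
        have h1 := Fdiff hab hAcont hbcont hC0 hC hρ2' i
        rw [hzero, zero_add] at h1
        have key : (N:ℝ) * C * (ε / ((N:ℝ) * C + 1)) ≤ ε := by
          rw [← mul_div_assoc, div_le_iff₀ (by linarith : (0:ℝ) < (N:ℝ) * C + 1)]
          nlinarith
        linarith
      refine le_antisymm ?_ (hFpos i)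
      by_contra hcc
      push_neg at hcc
      have := hle _ (by linarith :
        0 < sSup ((fun u => (𝔄 u *ᵥ zstar - 𝔅 u) i) '' Set.Icc a b) / 2)
      linarith
    rw [hF0, min_eq_left (le_of_lt h0)]
end

section
/- Fix a constant c_min > 0 and a penalty term Π such that each π_i is continuously differentiable on (0,∞) with π_i'(y) ≥ c_min for all y ∈ (0,∞) and all i. Suppose that for every ρ > 0 there is a solution z_ρ of the penalised obstacle equation, and let z* be the solution of the discrete HJB obstacle problem min{ max_{u∈U}{A_u z* − b_u}, Ãz* − b̃ } = 0. Then there exists a constant C > 0, depending on c_min but not on ρ or Π, such that ‖z* − z_ρ‖∞ ≤ C/ρ for every ρ > 0. -/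
open Matrix Filter

lemma mulVec_at_max {N : ℕ} {A : Matrix (Fin N) (Fin N) ℝ} (hA : KoMat A)
    (w : Fin N → ℝ) (i : Fin N) (hmax : ∀ j, w j ≤ w i) (hnn : 0 ≤ w i) :
    (A i i - ∑ j ∈ Finset.univ.erase i, |A i j|) * w i ≤ (A *ᵥ w) i := by
  have hmv : (A *ᵥ w) i = ∑ j ∈ Finset.univ.erase i, A i j * w j + A i i * w i := by
    rw [Finset.sum_erase_add]
    · simp [Matrix.mulVec, dotProduct]
    · exact Finset.mem_univ i
  rw [hmv]
  have hterm : ∀ j ∈ Finset.univ.erase i, (-|A i j|) * w i ≤ A i j * w j := by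
    intro j hj
    have hji : j ≠ i := Finset.ne_of_mem_erase hj
    have h1 : A i j * w i ≤ A i j * w j :=
      mul_le_mul_of_nonpos_left (hmax j) (hA.1 i j (Ne.symm hji))
    have h2 : (-|A i j|) * w i ≤ A i j * w i :=
      mul_le_mul_of_nonneg_right (neg_abs_le _) hnn
    linarith
  have hsum := Finset.sum_le_sum hterm
  rw [← Finset.sum_mul, Finset.sum_neg_distrib] at hsum
  nlinarith [hsum]

lemma pen_lower {N : ℕ} (P : PenaltyTerm N) (dπ : Fin N → ℝ → ℝ)
    (hderiv : ∀ i y, 0 < y → HasDerivAt (P.π i) (dπ i y) y)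
    (cmin : ℝ) (hlb : ∀ i y, 0 < y → cmin ≤ dπ i y) (i : Fin N) (y : ℝ) (hy : 0 < y) :
    cmin * y ≤ P.π i y := by
  obtain ⟨c, hc, hceq⟩ := exists_hasDerivAt_eq_slope (P.π i) (dπ i) hy
    ((P.cont i).continuousOn) (fun x hx => hderiv i x hx.1)
  have h1 : cmin ≤ (P.π i y - P.π i 0) / (y - 0) := hceq ▸ hlb i c hc.1
  rw [P.eq_zero i 0 le_rfl, sub_zero, sub_zero] at h1
  exact (le_div_iff₀ hy).mp h1


/-- First-order penalisation error estimate `‖z* - z_ρ‖∞ ≤ C/ρ` for the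
obstacle problem, with `C > 0` depending on `c_min` but not on `ρ` nor on the
penalty term `Π` (assumed continuously differentiable on `(0,∞)` with
derivative `≥ c_min` there). -/
theorem penalised_obstacle_error_estimate
    (N : ℕ) (hN : 0 < N) (a b : ℝ) (hab : a ≤ b)
    (𝔄 : ℝ → Matrix (Fin N) (Fin N) ℝ) (𝔅 : ℝ → (Fin N → ℝ))
    (hAcont : ContinuousOn 𝔄 (Set.Icc a b)) (hbcont : ContinuousOn 𝔅 (Set.Icc a b))
    (hKo : ∀ u ∈ Set.Icc a b, KoMat (𝔄 u))
    (At : Matrix (Fin N) (Fin N) ℝ) (bt : Fin N → ℝ) (hAt : KoMat At)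
    (cmin : ℝ) (hcmin : 0 < cmin)
    (zstar : Fin N → ℝ)
    (hzstar : ∀ i : Fin N,
      min (sSup ((fun u => (𝔄 u *ᵥ zstar - 𝔅 u) i) '' Set.Icc a b))
        ((At *ᵥ zstar - bt) i) = 0) :
    ∃ C > (0:ℝ),
      ∀ (P : PenaltyTerm N) (dπ : Fin N → ℝ → ℝ),
        (∀ i y, 0 < y → HasDerivAt (P.π i) (dπ i y) y) →
        (∀ i, ContinuousOn (dπ i) (Set.Ioi (0:ℝ))) →
        (∀ i y, 0 < y → cmin ≤ dπ i y) →
        ∀ ρ > (0:ℝ), ∀ zρ : Fin N → ℝ,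
          PenObstEq 𝔄 𝔅 (Set.Icc a b) At bt P ρ zρ →
          ‖zstar - zρ‖ ≤ C / ρ := by
  have hNE : Nonempty (Fin N) := Fin.pos_iff_nonempty.mp hN
  have huniv : (Finset.univ : Finset (Fin N)).Nonempty := Finset.univ_nonempty
  set F : (Fin N → ℝ) → Fin N → ℝ :=
    fun z i => sSup ((fun u => (𝔄 u *ᵥ z - 𝔅 u) i) '' Set.Icc a b) with hF
  -- continuity in u
  have hcont : ∀ (z : Fin N → ℝ) (i : Fin N),
      ContinuousOn (fun u => (𝔄 u *ᵥ z - 𝔅 u) i) (Set.Icc a b) := by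
    intro z i
    have h1 : (fun u => (𝔄 u *ᵥ z - 𝔅 u) i)
        = fun u => (∑ j, 𝔄 u i j * z j) - 𝔅 u i := by
      funext u; simp [Matrix.mulVec, dotProduct]
    rw [h1]
    apply ContinuousOn.sub
    · apply continuousOn_finset_sum
      intro j _
      exact (((continuous_apply j).comp (continuous_apply i)).comp_continuousOn
        hAcont).mul continuousOn_const
    · exact (continuous_apply i).comp_continuousOn hbcont
  have hne : (Set.Icc a b).Nonempty := Set.nonempty_Icc.mpr hab
  have hbdd : ∀ (z : Fin N → ℝ) (i : Fin N),
      BddAbove ((fun u => (𝔄 u *ᵥ z - 𝔅 u) i) '' Set.Icc a b) :=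
    fun z i => (isCompact_Icc.image_of_continuousOn (hcont z i)).bddAbove
  have hleF : ∀ (z : Fin N → ℝ) (i : Fin N), ∀ u ∈ Set.Icc a b,
      (𝔄 u *ᵥ z - 𝔅 u) i ≤ F z i :=
    fun z i u hu => le_csSup (hbdd z i) (Set.mem_image_of_mem _ hu)
  have hattain : ∀ (z : Fin N → ℝ) (i : Fin N),
      ∃ u ∈ Set.Icc a b, F z i = (𝔄 u *ᵥ z - 𝔅 u) i := by
    intro z i
    obtain ⟨u, hu, hmax⟩ := isCompact_Icc.exists_isMaxOn hne (hcont z i)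
    refine ⟨u, hu, le_antisymm ?_ (hleF z i u hu)⟩
    apply csSup_le (hne.image _)
    rintro _ ⟨v, hv, rfl⟩
    exact hmax hv
  -- comparison
  have hcomp : ∀ (x y : Fin N → ℝ) (i : Fin N),
      ∃ u ∈ Set.Icc a b, (𝔄 u *ᵥ (x - y)) i ≤ F x i - F y i := by
    intro x y i
    obtain ⟨u, hu, hFy⟩ := hattain y i
    refine ⟨u, hu, ?_⟩
    have h1 := hleF x i u hu
    have h2 : (𝔄 u *ᵥ (x - y)) i = (𝔄 u *ᵥ x - 𝔅 u) i - (𝔄 u *ᵥ y - 𝔅 u) i := by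
      rw [Matrix.mulVec_sub]; simp
    rw [h2, ← hFy]
    linarith
  -- dominance gaps
  have hgapAt : ∀ i, 0 < At i i - ∑ j ∈ Finset.univ.erase i, |At i j| :=
    fun i => sub_pos.mpr (hAt.2 i)
  set δ : ℝ := Finset.univ.inf' huniv
    (fun i => At i i - ∑ j ∈ Finset.univ.erase i, |At i j|) with hδ
  have hδpos : 0 < δ := by
    rw [hδ, Finset.lt_inf'_iff]
    exact fun i _ => hgapAt i
  have hδle : ∀ i, δ ≤ At i i - ∑ j ∈ Finset.univ.erase i, |At i j| :=
    fun i => Finset.inf'_le _ (Finset.mem_univ i)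
  -- from hzstar
  have hFz0 : ∀ i, 0 ≤ F zstar i := by
    intro i
    have := hzstar i
    calc (0:ℝ) = _ := this.symm
    _ ≤ F zstar i := min_le_left _ _
  have hAtz : ∀ i, 0 ≤ (At *ᵥ zstar - bt) i := by
    intro i
    have := hzstar i
    calc (0:ℝ) = _ := this.symm
    _ ≤ _ := min_le_right _ _
  set M : ℝ := Finset.univ.sup' huniv (F zstar) with hM
  have hMle : ∀ i, F zstar i ≤ M := fun i => Finset.le_sup' _ (Finset.mem_univ i)
  have hM0 : 0 ≤ M := le_trans (hFz0 (Classical.arbitrary _)) (hMle _)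
  refine ⟨(M + 1) / (cmin * δ), div_pos (by linarith) (mul_pos hcmin hδpos), ?_⟩
  intro P dπ hderiv hdcont hdlb ρ hρ zρ heq
  have hπnn : ∀ (i : Fin N) (y : ℝ), 0 ≤ P.π i y := by
    intro i y
    rcases le_or_gt y 0 with h | h
    · exact le_of_eq (P.eq_zero i y h).symm
    · exact (P.pos i y h).le
  have heq' : ∀ i, F zρ i = ρ * P.π i ((bt - At *ᵥ zρ) i) := by
    intro i; have := heq i; linarith [this]
  have hFzρnn : ∀ i, 0 ≤ F zρ i := by
    intro i; rw [heq' i]; exact mul_nonneg hρ.le (hπnn _ _)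
  -- Step 1 : zρ ≤ zstar
  have hle : ∀ j, zρ j ≤ zstar j := by
    by_contra hcon
    push_neg at hcon
    obtain ⟨j0, hj0⟩ := hcon
    obtain ⟨i, _, hmax⟩ := Finset.exists_max_image Finset.univ (fun j => zρ j - zstar j) huniv
    have hmax' : ∀ j, (zρ - zstar) j ≤ (zρ - zstar) i := by
      intro j; simpa using hmax j (Finset.mem_univ j)
    have hwi : 0 < (zρ - zstar) i := by
      have := hmax' j0
      simp only [Pi.sub_apply] at this ⊢
      linarith
    obtain ⟨u, hu, hcu⟩ := hcomp zρ zstar i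
    have hdom := mulVec_at_max (hKo u hu) (zρ - zstar) i hmax' hwi.le
    have hgapu : 0 < 𝔄 u i i - ∑ j ∈ Finset.univ.erase i, |𝔄 u i j| :=
      sub_pos.mpr ((hKo u hu).2 i)
    have hFpos : 0 < F zρ i := by
      have h1 := le_trans hdom hcu
      nlinarith [hFz0 i, mul_pos hgapu hwi]
    have hπpos : 0 < P.π i ((bt - At *ᵥ zρ) i) := by
      by_contra hc
      push_neg at hc
      rw [heq' i] at hFpos
      nlinarith
    have hbtz : 0 < (bt - At *ᵥ zρ) i := by
      by_contra hc
      push_neg at hc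
      rw [P.eq_zero i _ hc] at hπpos
      exact lt_irrefl 0 hπpos
    have hAtdom := mulVec_at_max hAt (zρ - zstar) i hmax' hwi.le
    have h1 : (At *ᵥ (zρ - zstar)) i = (At *ᵥ zρ) i - (At *ᵥ zstar) i := by
      rw [Matrix.mulVec_sub]; simp
    have h2 := hAtz i
    simp only [Pi.sub_apply] at h2 hbtz
    nlinarith [mul_pos (hgapAt i) hwi]
  -- Step 2 : bound zstar - zρ
  set v : Fin N → ℝ := zstar - zρ with hv
  have hvnn : ∀ j, 0 ≤ v j := by
    intro j; simp only [hv, Pi.sub_apply]; linarith [hle j]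
  obtain ⟨i, _, hmaxv⟩ := Finset.exists_max_image Finset.univ v huniv
  have hmaxv' : ∀ j, v j ≤ v i := fun j => hmaxv j (Finset.mem_univ j)
  have hCρnn : 0 ≤ (M + 1) / (cmin * δ) / ρ :=
    div_nonneg (div_nonneg (by linarith) (mul_pos hcmin hδpos).le) hρ.le
  -- F zρ i ≤ F zstar i and related
  obtain ⟨u, hu, hcu⟩ := hcomp zstar zρ i
  have hdomu := mulVec_at_max (hKo u hu) v i hmaxv' (hvnn i)
  have hgapu : 0 < 𝔄 u i i - ∑ j ∈ Finset.univ.erase i, |𝔄 u i j| :=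
    sub_pos.mpr ((hKo u hu).2 i)
  have hkey : v i ≤ (M + 1) / (cmin * δ) / ρ := by
    rcases min_eq_iff.mp (hzstar i) with ⟨hc1, _⟩ | ⟨hc2, _⟩
    · -- F zstar i = 0
      have h1 := le_trans hdomu hcu
      have h2 : v i ≤ 0 := by nlinarith [hFzρnn i, hvnn i]
      linarith [hCρnn]
    · -- (At zstar - bt) i = 0
      have hFle : F zρ i ≤ M := by
        have h1 := le_trans hdomu hcu
        nlinarith [hMle i, mul_nonneg hgapu.le (hvnn i)]
      have hAtv := mulVec_at_max hAt v i hmaxv' (hvnn i)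
      have ht : (bt - At *ᵥ zρ) i = (At *ᵥ v) i := by
        have h3 : (At *ᵥ v) i = (At *ᵥ zstar) i - (At *ᵥ zρ) i := by
          rw [hv, Matrix.mulVec_sub]; simp
        simp only [Pi.sub_apply] at hc2 ⊢
        linarith [h3]
      rcases le_or_gt (v i) 0 with hvi | hvi
      · linarith [hCρnn]
      · have htpos : δ * v i ≤ (bt - At *ᵥ zρ) i := by
          rw [ht]
          calc δ * v i ≤ (At i i - ∑ j ∈ Finset.univ.erase i, |At i j|) * v i :=
                mul_le_mul_of_nonneg_right (hδle i) (hvnn i)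
          _ ≤ _ := hAtv
        have hπlb : cmin * (δ * v i) ≤ P.π i ((bt - At *ᵥ zρ) i) := by
          calc cmin * (δ * v i) ≤ P.π i (δ * v i) :=
                pen_lower P dπ hderiv cmin hdlb i _ (mul_pos hδpos hvi)
          _ ≤ _ := P.mono i htpos
        have hfin : ρ * (cmin * (δ * v i)) ≤ M := by
          calc ρ * (cmin * (δ * v i)) ≤ ρ * P.π i ((bt - At *ᵥ zρ) i) :=
                mul_le_mul_of_nonneg_left hπlb hρ.le
          _ = F zρ i := (heq' i).symm
          _ ≤ M := hFle
        rw [div_div, le_div_iff₀ (by positivity)]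
        nlinarith
  rw [pi_norm_le_iff_of_nonneg hCρnn]
  intro j
  rw [Real.norm_of_nonneg (hvnn j)]
  exact le_trans (hmaxv' j) hkey
end

section
/- For every ρ > 0 there exists a (unique) z_ρ ∈ ℝ^N satisfying the penalised obstacle equation with penalty term Π(y) = max{y,0}: max_{u∈U}{A_u z_ρ − b_u} − ρ·max{b̃ − Ãz_ρ , 0} = 0, i.e. for every component i one has max_{u∈U}(A_u z_ρ − b_u)_i − ρ·max{(b̃ − Ãz_ρ)_i , 0} = 0. -/
open Matrix Filter

private lemma core_bound {N : ℕ} (i : Fin N) (A : Matrix (Fin N) (Fin N) ℝ) (d : Fin N → ℝ)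
    (lam del : ℝ) (hlam : 0 ≤ lam) (hc : lam * A i i ≤ 1)
    (hdel : del ≤ A i i - ∑ j ∈ Finset.univ.erase i, |A i j|) :
    |d i - lam * (A *ᵥ d) i| ≤ (1 - lam * del) * ‖d‖ := by
  have hnorm : ∀ j, |d j| ≤ ‖d‖ := fun j => by
    simpa [Real.norm_eq_abs] using norm_le_pi_norm d j
  have hnn : 0 ≤ ‖d‖ := norm_nonneg d
  have hmv : (A *ᵥ d) i = A i i * d i + ∑ j ∈ Finset.univ.erase i, A i j * d j := by
    rw [Matrix.mulVec, dotProduct]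
    exact (Finset.add_sum_erase _ _ (Finset.mem_univ i)).symm
  set s := ∑ j ∈ Finset.univ.erase i, |A i j| with hs
  set R := ∑ j ∈ Finset.univ.erase i, A i j * d j with hR
  have hs0 : 0 ≤ s := Finset.sum_nonneg fun _ _ => abs_nonneg _
  have hRb : |R| ≤ s * ‖d‖ := by
    calc |R| ≤ ∑ j ∈ Finset.univ.erase i, |A i j * d j| := Finset.abs_sum_le_sum_abs _ _
    _ ≤ ∑ j ∈ Finset.univ.erase i, |A i j| * ‖d‖ := by
        refine Finset.sum_le_sum fun j _ => ?_
        rw [abs_mul]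
        exact mul_le_mul_of_nonneg_left (hnorm j) (abs_nonneg _)
    _ = s * ‖d‖ := (Finset.sum_mul _ _ _).symm
  rw [hmv]
  have e1 : d i - lam * (A i i * d i + R) = (1 - lam * A i i) * d i - lam * R := by ring
  rw [e1]
  have h2 : |(1 - lam * A i i) * d i - lam * R| ≤ |(1 - lam * A i i) * d i| + |lam * R| := by
    have := abs_add_le ((1 - lam * A i i) * d i) (-(lam * R))
    simpa [sub_eq_add_neg, abs_neg] using this
  have h3 : |(1 - lam * A i i) * d i| ≤ (1 - lam * A i i) * ‖d‖ := by
    rw [abs_mul, abs_of_nonneg (by linarith : (0:ℝ) ≤ 1 - lam * A i i)]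
    exact mul_le_mul_of_nonneg_left (hnorm i) (by linarith)
  have h4 : |lam * R| ≤ lam * (s * ‖d‖) := by
    rw [abs_mul, abs_of_nonneg hlam]
    exact mul_le_mul_of_nonneg_left hRb hlam
  have h5 : lam * del ≤ lam * (A i i - s) := mul_le_mul_of_nonneg_left hdel hlam
  nlinarith [mul_le_mul_of_nonneg_right h5 hnn]

private lemma theta_aux (p q : ℝ) (h : q ≤ p) :
    ∃ θ : ℝ, 0 ≤ θ ∧ θ ≤ 1 ∧ max p 0 - max q 0 = θ * (p - q) := by
  rcases eq_or_lt_of_le h with rfl | hlt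
  · exact ⟨0, le_rfl, zero_le_one, by simp⟩
  · have hpq : 0 < p - q := sub_pos.2 hlt
    have d0 : 0 ≤ max p 0 - max q 0 := sub_nonneg.2 (max_le_max hlt.le le_rfl)
    have d1 : max p 0 - max q 0 ≤ p - q := by
      have := abs_max_sub_max_le_abs p q 0
      rw [abs_of_pos hpq] at this
      exact le_trans (le_abs_self _) this
    refine ⟨(max p 0 - max q 0) / (p - q), div_nonneg d0 hpq.le, (div_le_one hpq).2 d1, ?_⟩
    field_simp

private lemma theta_exists (p q : ℝ) :
    ∃ θ : ℝ, 0 ≤ θ ∧ θ ≤ 1 ∧ max p 0 - max q 0 = θ * (p - q) := by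
  rcases le_total q p with h | h
  · exact theta_aux p q h
  · obtain ⟨θ, h0, h1, he⟩ := theta_aux q p h
    exact ⟨θ, h0, h1, by linarith⟩

private lemma sSup_image_sub_le {U : Set ℝ} (hne : U.Nonempty) {f g : ℝ → ℝ}
    (hgb : BddAbove (g '' U)) (c : ℝ) (h : ∀ u ∈ U, f u ≤ g u + c) :
    sSup (f '' U) ≤ sSup (g '' U) + c := by
  apply csSup_le (hne.image f)
  rintro x ⟨u, hu, rfl⟩
  exact le_trans (h u hu) (add_le_add_left (le_csSup hgb ⟨u, hu, rfl⟩) c)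

set_option maxHeartbeats 1600000 in
/-- For every `ρ > 0`, the penalised obstacle equation with penalty term
`Π(y) = max{y,0}` has a unique solution; the componentwise maximum over the
compact set `U` is expressed via `sSup` of the image. -/
theorem penalised_obstacle_max_penalty_exists_unique
    (N : ℕ) (hN : 0 < N) (a b : ℝ) (hab : a ≤ b)
    (𝔄 : ℝ → Matrix (Fin N) (Fin N) ℝ) (𝔅 : ℝ → (Fin N → ℝ))
    (hAcont : ContinuousOn 𝔄 (Set.Icc a b)) (hbcont : ContinuousOn 𝔅 (Set.Icc a b))
    (hKo : ∀ u ∈ Set.Icc a b, KoMat (𝔄 u))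
    (At : Matrix (Fin N) (Fin N) ℝ) (bt : Fin N → ℝ) (hAt : KoMat At)
    (ρ : ℝ) (hρ : 0 < ρ) :
    ∃! z : Fin N → ℝ,
      ∀ i : Fin N,
        sSup ((fun u => (𝔄 u *ᵥ z - 𝔅 u) i) '' Set.Icc a b) -
          ρ * max ((bt - At *ᵥ z) i) 0 = 0 := by
  haveI : Nonempty (Fin N) := Fin.pos_iff_nonempty.mp hN
  set U : Set ℝ := Set.Icc a b with hUdef
  have hne : U.Nonempty := Set.nonempty_Icc.2 hab
  have hcomp : IsCompact U := isCompact_Icc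
  -- continuity of entries
  have hent : ∀ i j, ContinuousOn (fun u => 𝔄 u i j) U := fun i j =>
    (continuous_apply j).comp_continuousOn ((continuous_apply i).comp_continuousOn hAcont)
  have hbent : ∀ i, ContinuousOn (fun u => 𝔅 u i) U := fun i =>
    (continuous_apply i).comp_continuousOn hbcont
  have hmvcont : ∀ (z : Fin N → ℝ) (i : Fin N), ContinuousOn (fun u => (𝔄 u *ᵥ z) i) U := by
    intro z i
    have he : (fun u => (𝔄 u *ᵥ z) i) = fun u => ∑ j, 𝔄 u i j * z j := by
      funext u; rw [Matrix.mulVec, dotProduct]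
    rw [he]
    exact continuousOn_finset_sum _ fun j _ => (hent i j).mul continuousOn_const
  have hfcont : ∀ (z : Fin N → ℝ) (i : Fin N),
      ContinuousOn (fun u => (𝔄 u *ᵥ z - 𝔅 u) i) U := by
    intro z i
    have he : (fun u => (𝔄 u *ᵥ z - 𝔅 u) i) = fun u => (𝔄 u *ᵥ z) i - 𝔅 u i := by
      funext u; simp
    rw [he]
    exact (hmvcont z i).sub (hbent i)
  have hbdd : ∀ (z : Fin N → ℝ) (i : Fin N),
      BddAbove ((fun u => (𝔄 u *ᵥ z - 𝔅 u) i) '' U) := fun z i =>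
    (hcomp.image_of_continuousOn (hfcont z i)).bddAbove
  -- the diagonal-dominance gap function
  set f : Fin N → ℝ → ℝ :=
    fun i u => 𝔄 u i i - ∑ j ∈ Finset.univ.erase i, |𝔄 u i j| with hfdef
  have hfc : ∀ i, ContinuousOn (f i) U := fun i =>
    (hent i i).sub (continuousOn_finset_sum _ fun j _ => (hent i j).abs)
  have hfpos : ∀ u ∈ U, ∀ i, 0 < f i u := fun u hu i => sub_pos.2 ((hKo u hu).2 i)
  set g : ℝ → ℝ := fun u => Finset.univ.inf' Finset.univ_nonempty (fun i => f i u) with hgdef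
  have hgc : ContinuousOn g U :=
    ContinuousOn.finset_inf'_apply Finset.univ_nonempty fun i _ => hfc i
  obtain ⟨u₀, hu₀U, hu₀min'⟩ := hcomp.exists_isMinOn hne hgc
  have hu₀min : ∀ u ∈ U, g u₀ ≤ g u := fun u hu => hu₀min' hu
  set δ : ℝ := g u₀ with hδdef
  have hδpos : 0 < δ := by
    obtain ⟨i, _, hi⟩ := Finset.exists_mem_eq_inf' (Finset.univ_nonempty (α := Fin N))
      (fun i => f i u₀)
    have he : δ = f i u₀ := hi
    rw [he]
    exact hfpos u₀ hu₀U i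
  have hδle : ∀ u ∈ U, ∀ i, δ ≤ f i u := fun u hu i =>
    le_trans (hu₀min u hu) (Finset.inf'_le _ (Finset.mem_univ i))
  -- bounds for the diagonal
  have hMbdd : ∀ i : Fin N, BddAbove ((fun u => 𝔄 u i i) '' U) := fun i =>
    (hcomp.image_of_continuousOn (hent i i)).bddAbove
  set M : Fin N → ℝ := fun i => sSup ((fun u => 𝔄 u i i) '' U) with hMdef
  have hMle : ∀ u ∈ U, ∀ i, 𝔄 u i i ≤ M i := fun u hu i =>
    le_csSup (hMbdd i) ⟨u, hu, rfl⟩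
  have hAtpos : ∀ i, 0 < At i i := fun i =>
    lt_of_le_of_lt (Finset.sum_nonneg fun _ _ => abs_nonneg _) (hAt.2 i)
  set C : ℝ := (Finset.univ.sup' Finset.univ_nonempty fun i => M i + ρ * At i i) + 1 with hCdef
  have hCb : ∀ u ∈ U, ∀ i, M i + ρ * At i i ≤ C - 1 := fun u hu i => by
    rw [hCdef]; simp only [add_sub_cancel_right]
    exact Finset.le_sup' (fun i => M i + ρ * At i i) (Finset.mem_univ i)
  have hδC : δ + 1 ≤ C := by
    obtain ⟨i₀⟩ := (inferInstance : Nonempty (Fin N))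
    have h1 : δ ≤ f i₀ u₀ := hδle u₀ hu₀U i₀
    have h2 : f i₀ u₀ ≤ 𝔄 u₀ i₀ i₀ := by
      simp only [hfdef]
      have : (0:ℝ) ≤ ∑ j ∈ Finset.univ.erase i₀, |𝔄 u₀ i₀ j| :=
        Finset.sum_nonneg fun _ _ => abs_nonneg _
      linarith
    have h3 : 𝔄 u₀ i₀ i₀ ≤ M i₀ := hMle u₀ hu₀U i₀
    have h4 : M i₀ + ρ * At i₀ i₀ ≤ C - 1 := hCb u₀ hu₀U i₀
    have h5 : 0 < ρ * At i₀ i₀ := mul_pos hρ (hAtpos i₀)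
    linarith
  have hCpos : 0 < C := by linarith
  set lam : ℝ := 1 / C with hlamdef
  have hlampos : 0 < lam := by positivity
  set K : ℝ := 1 - lam * δ with hKdef
  have hK0 : 0 ≤ K := by
    have : lam * δ ≤ 1 := by
      rw [hlamdef, div_mul_eq_mul_div, one_mul, div_le_one hCpos]; linarith
    linarith
  have hK1 : K < 1 := by
    have : 0 < lam * δ := mul_pos hlampos hδpos
    rw [hKdef]; linarith
  -- the map G
  set E : (Fin N → ℝ) → Fin N → ℝ := fun z i =>
    sSup ((fun u => (𝔄 u *ᵥ z - 𝔅 u) i) '' U) - ρ * max ((bt - At *ᵥ z) i) 0 with hEdef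
  set G : (Fin N → ℝ) → Fin N → ℝ := fun z i => z i - lam * E z i with hGdef
  -- the key contraction estimate
  have hGdiff : ∀ z w : Fin N → ℝ, ∀ i, |G z i - G w i| ≤ K * ‖z - w‖ := by
    intro z w i
    set d : Fin N → ℝ := z - w with hddef
    have hzw : z = w + d := by rw [hddef]; ring
    have hlin : ∀ u, ∀ i' : Fin N,
        (𝔄 u *ᵥ z - 𝔅 u) i' = (𝔄 u *ᵥ w - 𝔅 u) i' + (𝔄 u *ᵥ d) i' := by
      intro u i'
      rw [hzw, Matrix.mulVec_add]
      simp only [Pi.sub_apply, Pi.add_apply]; ring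
    -- penalty term
    set p : ℝ := (bt - At *ᵥ z) i with hpdef
    set q : ℝ := (bt - At *ᵥ w) i with hqdef
    have hpq : p - q = -((At *ᵥ d) i) := by
      rw [hpdef, hqdef, hddef, Matrix.mulVec_sub]
      simp only [Pi.sub_apply]; ring
    obtain ⟨θ, hθ0, hθ1, hθe⟩ := theta_exists p q
    have hρθ : 0 ≤ ρ * θ := mul_nonneg hρ.le hθ0
    -- extrema of u ↦ (𝔄 u *ᵥ d) i
    obtain ⟨u₁, hu₁U, hu₁min'⟩ := hcomp.exists_isMinOn hne (hmvcont d i)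
    obtain ⟨u₂, hu₂U, hu₂max'⟩ := hcomp.exists_isMaxOn hne (hmvcont d i)
    have hu₁min : ∀ u ∈ U, (𝔄 u₁ *ᵥ d) i ≤ (𝔄 u *ᵥ d) i := fun u hu => hu₁min' hu
    have hu₂max : ∀ u ∈ U, (𝔄 u *ᵥ d) i ≤ (𝔄 u₂ *ᵥ d) i := fun u hu => hu₂max' hu
    -- bounds on the difference of sups
    set Sz : ℝ := sSup ((fun u => (𝔄 u *ᵥ z - 𝔅 u) i) '' U) with hSz
    set Sw : ℝ := sSup ((fun u => (𝔄 u *ᵥ w - 𝔅 u) i) '' U) with hSw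
    have hup : Sz ≤ Sw + (𝔄 u₂ *ᵥ d) i := by
      refine sSup_image_sub_le hne (hbdd w i) _ fun u hu => ?_
      rw [hlin u i]
      exact add_le_add_right (hu₂max u hu) _
    have hlo : Sw ≤ Sz + (-(𝔄 u₁ *ᵥ d) i) := by
      refine sSup_image_sub_le hne (hbdd z i) _ fun u hu => ?_
      have := hlin u i
      have h2 := hu₁min u hu
      linarith
    -- general per-matrix estimate
    have hcore : ∀ u' ∈ U, |d i - lam * ((𝔄 u' + (ρ * θ) • At) *ᵥ d) i| ≤ K * ‖d‖ := by
      intro u' hu'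
      set A' : Matrix (Fin N) (Fin N) ℝ := 𝔄 u' + (ρ * θ) • At with hA'
      have hA'ii : A' i i = 𝔄 u' i i + ρ * θ * At i i := by
        rw [hA']; simp [Matrix.add_apply, Matrix.smul_apply, mul_assoc]
      have hc : lam * A' i i ≤ 1 := by
        have h1 : A' i i ≤ C := by
          have h2 : ρ * θ * At i i ≤ ρ * At i i := by
            have h := mul_le_mul_of_nonneg_right
              (mul_le_mul_of_nonneg_left hθ1 hρ.le) (hAtpos i).le
            simpa [mul_assoc] using h
          have h3 := hMle u' hu' i
          have h4 := hCb u' hu' i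
          rw [hA'ii]; linarith
        calc lam * A' i i ≤ lam * C := mul_le_mul_of_nonneg_left h1 hlampos.le
        _ = 1 := by rw [hlamdef]; field_simp
      have hdel : δ ≤ A' i i - ∑ j ∈ Finset.univ.erase i, |A' i j| := by
        have hsum : ∑ j ∈ Finset.univ.erase i, |A' i j| ≤
            (∑ j ∈ Finset.univ.erase i, |𝔄 u' i j|) +
              ρ * θ * ∑ j ∈ Finset.univ.erase i, |At i j| := by
          rw [Finset.mul_sum, ← Finset.sum_add_distrib]
          refine Finset.sum_le_sum fun j _ => ?_
          have : A' i j = 𝔄 u' i j + ρ * θ * At i j := by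
            rw [hA']; simp [Matrix.add_apply, Matrix.smul_apply, mul_assoc]
          rw [this]
          calc |𝔄 u' i j + ρ * θ * At i j| ≤ |𝔄 u' i j| + |ρ * θ * At i j| := abs_add_le _ _
          _ = |𝔄 u' i j| + ρ * θ * |At i j| := by rw [abs_mul, abs_of_nonneg hρθ]
        have h1 : δ ≤ f i u' := hδle u' hu' i
        have h2 : ∑ j ∈ Finset.univ.erase i, |At i j| ≤ At i i := (hAt.2 i).le
        have h3 : ρ * θ * (∑ j ∈ Finset.univ.erase i, |At i j|) ≤ ρ * θ * At i i :=
          mul_le_mul_of_nonneg_left h2 hρθ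
        rw [hA'ii, hfdef] at *
        simp only [hfdef] at h1
        linarith
      exact core_bound i A' d lam δ hlampos.le hc hdel
    have hexp : ∀ u' : ℝ, ((𝔄 u' + (ρ * θ) • At) *ᵥ d) i
        = (𝔄 u' *ᵥ d) i + ρ * θ * (At *ᵥ d) i := by
      intro u'
      rw [Matrix.add_mulVec, Matrix.smul_mulVec]
      simp [Pi.add_apply, Pi.smul_apply]
    -- assemble
    have hGzw : G z i - G w i = d i - lam * (Sz - Sw) - lam * (ρ * θ * (At *ᵥ d) i) := by
      have hdi : d i = z i - w i := by rw [hddef]; simp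
      simp only [hGdef, hEdef]
      linear_combination (-1 : ℝ) * hdi + lam * ρ * hθe + lam * ρ * θ * hpq
    have hub : G z i - G w i ≤ K * ‖d‖ := by
      have h1 : G z i - G w i ≤ d i - lam * ((𝔄 u₁ *ᵥ d) i + ρ * θ * (At *ᵥ d) i) := by
        rw [hGzw]
        have h2 : (𝔄 u₁ *ᵥ d) i ≤ Sz - Sw := by linarith
        have h3 := mul_le_mul_of_nonneg_left h2 hlampos.le
        nlinarith [h3]
      calc G z i - G w i ≤ d i - lam * ((𝔄 u₁ + (ρ * θ) • At) *ᵥ d) i := by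
            rw [hexp u₁]; exact h1
      _ ≤ |d i - lam * ((𝔄 u₁ + (ρ * θ) • At) *ᵥ d) i| := le_abs_self _
      _ ≤ K * ‖d‖ := hcore u₁ hu₁U
    have hlb : -(K * ‖d‖) ≤ G z i - G w i := by
      have h1 : d i - lam * ((𝔄 u₂ *ᵥ d) i + ρ * θ * (At *ᵥ d) i) ≤ G z i - G w i := by
        rw [hGzw]
        have h2 : Sz - Sw ≤ (𝔄 u₂ *ᵥ d) i := by linarith
        have h3 := mul_le_mul_of_nonneg_left h2 hlampos.le
        nlinarith [h3]
      calc -(K * ‖d‖) ≤ -|d i - lam * ((𝔄 u₂ + (ρ * θ) • At) *ᵥ d) i| :=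
            neg_le_neg (hcore u₂ hu₂U)
      _ ≤ d i - lam * ((𝔄 u₂ + (ρ * θ) • At) *ᵥ d) i := neg_abs_le _
      _ ≤ G z i - G w i := by rw [hexp u₂]; exact h1
    exact abs_le.2 ⟨by linarith, hub⟩
  -- contraction
  set K' : NNReal := ⟨K, hK0⟩ with hK'def
  have hK'lt : K' < 1 := by
    have hc : (K' : ℝ) = K := rfl
    rw [← NNReal.coe_lt_coe, NNReal.coe_one, hc]
    exact hK1
  have hlip : LipschitzWith K' G := by
    apply LipschitzWith.of_dist_le_mul
    intro z w
    rw [dist_eq_norm, dist_eq_norm]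
    have hKnn : (0:ℝ) ≤ (K' : ℝ) * ‖z - w‖ := mul_nonneg hK0 (norm_nonneg _)
    refine (pi_norm_le_iff_of_nonneg hKnn).2 fun i => ?_
    rw [Real.norm_eq_abs]
    have := hGdiff z w i
    simpa [Pi.sub_apply, show (K' : ℝ) = K from rfl] using this
  have hcontr : ContractingWith K' G := ⟨hK'lt, hlip⟩
  obtain ⟨zfix, hfix⟩ : ∃ z : Fin N → ℝ, G z = z :=
    ⟨ContractingWith.fixedPoint G hcontr, hcontr.fixedPoint_isFixedPt⟩
  have hEquiv : ∀ z : Fin N → ℝ, (∀ i, E z i = 0) ↔ G z = z := by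
    intro z
    constructor
    · intro h; funext i; simp [hGdef, h i]
    · intro h i
      have hgi := congrFun h i
      simp only [hGdef] at hgi
      have hlam0 : lam ≠ 0 := ne_of_gt hlampos
      have hz0 : lam * E z i = 0 := by linarith
      exact (mul_eq_zero.1 hz0).resolve_left hlam0
  refine ⟨zfix, ?_, ?_⟩
  · intro i
    exact (hEquiv zfix).2 hfix i
  · intro y hy
    have hGy : G y = y := (hEquiv y).1 hy
    have hnn : 0 ≤ ‖y - zfix‖ := norm_nonneg _
    have hnorm : ‖y - zfix‖ ≤ K * ‖y - zfix‖ := by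
      refine (pi_norm_le_iff_of_nonneg (mul_nonneg hK0 hnn)).2 fun i => ?_
      have h2 := hGdiff y zfix i
      rw [congrFun hGy i, congrFun hfix i] at h2
      simpa [Real.norm_eq_abs, Pi.sub_apply] using h2
    have hz : ‖y - zfix‖ = 0 := by nlinarith
    exact sub_eq_zero.1 (norm_eq_zero.1 hz)
end

section
/- The Newton-like iteration for the penalised obstacle problem with Π(y) = max{y,0} is well defined (each matrix A_{u^max(z^n)} + ρ A^+(z^n) lies in K^o_N and is invertible), and there exists a constant C > 0 such that for every starting value z^0 ∈ ℝ^N the generated sequence (z^n)_{n≥0} satisfies ‖z^n‖∞ ≤ C for all n ≥ 1. -/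
open Matrix Filter

/-- Key estimate: for a strictly diagonally dominant matrix with gap `δ`,
solutions of `M x = c` satisfy `‖x‖ ≤ ‖c‖ / δ`. -/
lemma koMat_solution_bound {N : ℕ} (hN : 0 < N) (M : Matrix (Fin N) (Fin N) ℝ)
    (hM : KoMat M) (δ : ℝ) (hδ : 0 < δ)
    (hgap : ∀ r, δ ≤ M r r - ∑ s ∈ Finset.univ.erase r, |M r s|)
    (x c : Fin N → ℝ) (hxc : M *ᵥ x = c) : ‖x‖ ≤ ‖c‖ / δ := by
  have hne : (Finset.univ : Finset (Fin N)).Nonempty := by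
    simpa [Finset.univ_nonempty_iff] using Fin.pos_iff_nonempty.mp hN
  obtain ⟨i, -, hi⟩ := Finset.exists_max_image Finset.univ (fun j => |x j|) hne
  have hkey : δ * |x i| ≤ ‖c‖ := by
    have hMii : 0 < M i i :=
      lt_of_le_of_lt (Finset.sum_nonneg fun s _ => abs_nonneg _) (hM.2 i)
    have hc : c i = M i i * x i + ∑ s ∈ Finset.univ.erase i, M i s * x s := by
      have : c i = ∑ s, M i s * x s := by rw [← hxc]; rfl
      rw [this,
        ← Finset.add_sum_erase (Finset.univ) (fun s => M i s * x s) (Finset.mem_univ i)]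
    have h1 : M i i * |x i| ≤ |c i| + ∑ s ∈ Finset.univ.erase i, |M i s| * |x i| := by
      have : M i i * x i = c i - ∑ s ∈ Finset.univ.erase i, M i s * x s := by linarith
      calc M i i * |x i| = |M i i * x i| := by rw [abs_mul, abs_of_pos hMii]
        _ = |c i - ∑ s ∈ Finset.univ.erase i, M i s * x s| := by rw [this]
        _ ≤ |c i| + |∑ s ∈ Finset.univ.erase i, M i s * x s| := abs_sub _ _
        _ ≤ |c i| + ∑ s ∈ Finset.univ.erase i, |M i s * x s| :=
            add_le_add_right (Finset.abs_sum_le_sum_abs _ _) _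
        _ ≤ |c i| + ∑ s ∈ Finset.univ.erase i, |M i s| * |x i| := by
            refine add_le_add_right (Finset.sum_le_sum fun s hs => ?_) _
            rw [abs_mul]
            exact mul_le_mul_of_nonneg_left (hi s (Finset.mem_univ s)) (abs_nonneg _)
    have h2 : (M i i - ∑ s ∈ Finset.univ.erase i, |M i s|) * |x i| ≤ |c i| := by
      rw [← Finset.sum_mul] at h1
      nlinarith [abs_nonneg (x i)]
    have h3 : δ * |x i| ≤ (M i i - ∑ s ∈ Finset.univ.erase i, |M i s|) * |x i| :=
      mul_le_mul_of_nonneg_right (hgap i) (abs_nonneg _)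
    calc δ * |x i| ≤ |c i| := le_trans h3 h2
      _ ≤ ‖c‖ := by simpa [Real.norm_eq_abs] using norm_le_pi_norm c i
  have hnorm : ‖c‖ / δ ≥ 0 := div_nonneg (norm_nonneg _) hδ.le
  rw [pi_norm_le_iff_of_nonneg hnorm]
  intro j
  have := hi j (Finset.mem_univ j)
  rw [Real.norm_eq_abs]
  calc |x j| ≤ |x i| := this
    _ ≤ ‖c‖ / δ := (le_div_iff₀ hδ).mpr (by linarith [hkey])

lemma koMat_isUnit {N : ℕ} (hN : 0 < N) (M : Matrix (Fin N) (Fin N) ℝ)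
    (hM : KoMat M) : IsUnit M := by
  rw [← Matrix.mulVec_injective_iff_isUnit]
  have hne : (Finset.univ : Finset (Fin N)).Nonempty := by
    simpa [Finset.univ_nonempty_iff] using Fin.pos_iff_nonempty.mp hN
  set δ := Finset.univ.inf' hne (fun r => M r r - ∑ s ∈ Finset.univ.erase r, |M r s|) with hδdef
  have hδ : 0 < δ := by
    rw [hδdef, Finset.lt_inf'_iff]
    intro r _
    linarith [hM.2 r]
  have hgap : ∀ r, δ ≤ M r r - ∑ s ∈ Finset.univ.erase r, |M r s| := fun r =>
    Finset.inf'_le _ (Finset.mem_univ r)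
  intro x y hxy
  have h1 : M *ᵥ (x - y) = 0 := by
    rw [Matrix.mulVec_sub, hxy, sub_self]
  have := koMat_solution_bound hN M hM δ hδ hgap (x - y) 0 h1
  simp only [norm_zero, zero_div] at this
  have : x - y = 0 := norm_le_zero_iff.mp this
  exact sub_eq_zero.mp this

/-- The matrix `A_{u^max(y)}` whose `i`-th row is the `i`-th row of `A_{u^max(y,i)}`. -/
def AmaxMat {N : ℕ} (𝔄 : ℝ → Matrix (Fin N) (Fin N) ℝ)
    (umax : (Fin N → ℝ) → Fin N → ℝ) (y : Fin N → ℝ) :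
    Matrix (Fin N) (Fin N) ℝ :=
  fun i j => 𝔄 (umax y i) i j

/-- The vector `b_{u^max(y)}` whose `i`-th entry is `(b_{u^max(y,i)})_i`. -/
def bmaxVec {N : ℕ} (𝔅 : ℝ → (Fin N → ℝ))
    (umax : (Fin N → ℝ) → Fin N → ℝ) (y : Fin N → ℝ) : Fin N → ℝ :=
  fun i => 𝔅 (umax y i) i

/-- The matrix `A⁺(y)`: its `i`-th row is the `i`-th row of `Ã` if
`(b̃ - Ã y)_i > 0`, and the zero row otherwise. -/
noncomputable def AplusMat {N : ℕ} (At : Matrix (Fin N) (Fin N) ℝ)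
    (bt : Fin N → ℝ) (y : Fin N → ℝ) : Matrix (Fin N) (Fin N) ℝ :=
  fun i j => if 0 < (bt - At *ᵥ y) i then At i j else 0

/-- The vector `b⁺(y)`: its `i`-th entry is `(b̃)_i` if `(b̃ - Ã y)_i > 0`,
and `0` otherwise. -/
noncomputable def bplusVec {N : ℕ} (At : Matrix (Fin N) (Fin N) ℝ)
    (bt : Fin N → ℝ) (y : Fin N → ℝ) : Fin N → ℝ :=
  fun i => if 0 < (bt - At *ᵥ y) i then bt i else 0

/-- The Newton-like iteration for the penalised obstacle problem (with
`Π(y) = max{y,0}`) is well defined, and its iterates are bounded from step 1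
on, uniformly in the starting value. -/
theorem newton_like_obstacle_wellDefined_bounded
    (N : ℕ) (hN : 0 < N) (a b : ℝ) (hab : a ≤ b)
    (𝔄 : ℝ → Matrix (Fin N) (Fin N) ℝ) (𝔅 : ℝ → (Fin N → ℝ))
    (hAcont : ContinuousOn 𝔄 (Set.Icc a b)) (hbcont : ContinuousOn 𝔅 (Set.Icc a b))
    (hKo : ∀ u ∈ Set.Icc a b, KoMat (𝔄 u))
    (At : Matrix (Fin N) (Fin N) ℝ) (bt : Fin N → ℝ) (hAt : KoMat At)
    (ρ : ℝ) (hρ : 0 < ρ)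
    (umax : (Fin N → ℝ) → Fin N → ℝ)
    (hsel : ∀ (y : Fin N → ℝ) (i : Fin N), umax y i ∈ Set.Icc a b ∧
      IsGreatest ((fun v => (𝔄 v *ᵥ y - 𝔅 v) i) '' Set.Icc a b)
        ((𝔄 (umax y i) *ᵥ y - 𝔅 (umax y i)) i)) :
    (∀ y : Fin N → ℝ,
        KoMat (AmaxMat 𝔄 umax y + ρ • AplusMat At bt y) ∧
        IsUnit (AmaxMat 𝔄 umax y + ρ • AplusMat At bt y)) ∧
    ∃ C > (0:ℝ), ∀ z : ℕ → (Fin N → ℝ),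
      (∀ n : ℕ,
        (AmaxMat 𝔄 umax (z n) + ρ • AplusMat At bt (z n)) *ᵥ z (n + 1) =
          bmaxVec 𝔅 umax (z n) + ρ • bplusVec At bt (z n)) →
      ∀ n : ℕ, 1 ≤ n → ‖z n‖ ≤ C := by
  have hIcc : (Set.Icc a b).Nonempty := Set.nonempty_Icc.mpr hab
  have hcpt : IsCompact (Set.Icc a b) := isCompact_Icc
  have hne : (Finset.univ : Finset (Fin N)).Nonempty := by
    simpa [Finset.univ_nonempty_iff] using Fin.pos_iff_nonempty.mp hN
  -- uniform gap for each row
  have hδr : ∀ r : Fin N, ∃ δr > (0:ℝ), ∀ u ∈ Set.Icc a b,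
      δr ≤ 𝔄 u r r - ∑ s ∈ Finset.univ.erase r, |𝔄 u r s| := by
    intro r
    have hent : ∀ s : Fin N, ContinuousOn (fun u => 𝔄 u r s) (Set.Icc a b) := by
      intro s
      have h1 : Continuous (fun M : Matrix (Fin N) (Fin N) ℝ => M r s) :=
        (continuous_apply s).comp (continuous_apply r)
      exact h1.comp_continuousOn hAcont
    have hc : ContinuousOn
        (fun u => 𝔄 u r r - ∑ s ∈ Finset.univ.erase r, |𝔄 u r s|) (Set.Icc a b) := by
      refine (hent r).sub ?_
      exact continuousOn_finset_sum _ fun s _ => (hent s).abs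
    obtain ⟨u0, hu0, hmin⟩ := hcpt.exists_isMinOn hIcc hc
    refine ⟨𝔄 u0 r r - ∑ s ∈ Finset.univ.erase r, |𝔄 u0 r s|,
      by linarith [(hKo u0 hu0).2 r], fun u hu => ?_⟩
    exact isMinOn_iff.mp hmin u hu
  choose δr hδrpos hδrle using hδr
  set δ : ℝ := Finset.univ.inf' hne δr with hδdef
  have hδpos : 0 < δ := by
    rw [hδdef, Finset.lt_inf'_iff]
    exact fun r _ => hδrpos r
  have hδle : ∀ (r : Fin N), ∀ u ∈ Set.Icc a b,
      δ ≤ 𝔄 u r r - ∑ s ∈ Finset.univ.erase r, |𝔄 u r s| := fun r u hu =>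
    le_trans (Finset.inf'_le _ (Finset.mem_univ r)) (hδrle r u hu)
  -- uniform bound for 𝔅
  obtain ⟨u1, hu1, hBmax⟩ := hcpt.exists_isMaxOn hIcc hbcont.norm
  set B : ℝ := ‖𝔅 u1‖ with hBdef
  have hBnn : 0 ≤ B := norm_nonneg _
  have hBle : ∀ u ∈ Set.Icc a b, ‖𝔅 u‖ ≤ B := fun u hu => isMaxOn_iff.mp hBmax u hu
  -- gap lower bound for the iteration matrix
  have hrow : ∀ (y : Fin N → ℝ) (r : Fin N),
      δ ≤ (AmaxMat 𝔄 umax y + ρ • AplusMat At bt y) r r -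
        ∑ s ∈ Finset.univ.erase r, |(AmaxMat 𝔄 umax y + ρ • AplusMat At bt y) r s| := by
    intro y r
    have hu := (hsel y r).1
    have hAgap := hδle r (umax y r) hu
    simp only [Matrix.add_apply, Matrix.smul_apply, AmaxMat, AplusMat, smul_eq_mul]
    by_cases hcond : 0 < (bt - At *ᵥ y) r
    · simp only [hcond, if_true]
      have hsum : ∑ s ∈ Finset.univ.erase r, |𝔄 (umax y r) r s + ρ * At r s| ≤
          (∑ s ∈ Finset.univ.erase r, |𝔄 (umax y r) r s|) +
          ρ * ∑ s ∈ Finset.univ.erase r, |At r s| := by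
        rw [Finset.mul_sum, ← Finset.sum_add_distrib]
        refine Finset.sum_le_sum fun s _ => ?_
        calc |𝔄 (umax y r) r s + ρ * At r s| ≤ |𝔄 (umax y r) r s| + |ρ * At r s| :=
              abs_add_le _ _
          _ = |𝔄 (umax y r) r s| + ρ * |At r s| := by rw [abs_mul, abs_of_pos hρ]
      have hAtgap : ∑ s ∈ Finset.univ.erase r, |At r s| < At r r := hAt.2 r
      nlinarith
    · simp only [hcond, if_false, mul_zero, add_zero]
      exact hAgap
  have hoff : ∀ (y : Fin N → ℝ) (r s : Fin N), r ≠ s →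
      (AmaxMat 𝔄 umax y + ρ • AplusMat At bt y) r s ≤ 0 := by
    intro y r s hrs
    have h1 : 𝔄 (umax y r) r s ≤ 0 := (hKo _ (hsel y r).1).1 r s hrs
    simp only [Matrix.add_apply, Matrix.smul_apply, AmaxMat, AplusMat, smul_eq_mul]
    by_cases hcond : 0 < (bt - At *ᵥ y) r
    · simp only [hcond, if_true]
      have := hAt.1 r s hrs
      nlinarith
    · simp only [hcond, if_false, mul_zero, add_zero]
      exact h1
  have hKoM : ∀ y : Fin N → ℝ, KoMat (AmaxMat 𝔄 umax y + ρ • AplusMat At bt y) := by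
    intro y
    exact ⟨hoff y, fun r => by linarith [hrow y r]⟩
  refine ⟨fun y => ⟨hKoM y, koMat_isUnit hN _ (hKoM y)⟩, (B + ρ * ‖bt‖) / δ + 1, ?_, ?_⟩
  · positivity
  · intro z hz n hn
    obtain ⟨m, rfl⟩ : ∃ m, n = m + 1 := ⟨n - 1, by omega⟩
    have hrhs : ‖bmaxVec 𝔅 umax (z m) + ρ • bplusVec At bt (z m)‖ ≤ B + ρ * ‖bt‖ := by
      rw [pi_norm_le_iff_of_nonneg (by positivity)]
      intro i
      simp only [Pi.add_apply, Pi.smul_apply, bmaxVec, bplusVec, smul_eq_mul,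
        Real.norm_eq_abs]
      have h1 : |𝔅 (umax (z m) i) i| ≤ B := by
        refine le_trans ?_ (hBle _ (hsel (z m) i).1)
        simpa [Real.norm_eq_abs] using norm_le_pi_norm (𝔅 (umax (z m) i)) i
      have h2 : |bt i| ≤ ‖bt‖ := by
        simpa [Real.norm_eq_abs] using norm_le_pi_norm bt i
      by_cases hcond : 0 < (bt - At *ᵥ z m) i
      · simp only [hcond, if_true]
        calc |𝔅 (umax (z m) i) i + ρ * bt i| ≤ |𝔅 (umax (z m) i) i| + |ρ * bt i| :=
              abs_add_le _ _
          _ = |𝔅 (umax (z m) i) i| + ρ * |bt i| := by rw [abs_mul, abs_of_pos hρ]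
          _ ≤ B + ρ * ‖bt‖ := by nlinarith
      · simp only [hcond, if_false, mul_zero, add_zero]
        nlinarith [norm_nonneg bt]
    have hbd := koMat_solution_bound hN _ (hKoM (z m)) δ hδpos (hrow (z m))
      (z (m + 1)) _ (hz m)
    calc ‖z (m + 1)‖ ≤ ‖bmaxVec 𝔅 umax (z m) + ρ • bplusVec At bt (z m)‖ / δ := hbd
      _ ≤ (B + ρ * ‖bt‖) / δ := by gcongr
      _ ≤ (B + ρ * ‖bt‖) / δ + 1 := by linarith
end
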